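/- arXiv:0708.4408 — 2 statements merged into one kernel-verified Lean document; each statement's English description precedes it below -/
import Mathlib

section
/- Let (X_i)_{i≥1} be i.i.d. ℤ^d-valued random variables whose random walk has escape probability γ ∈ (0,1). Then for every real α ≥ 0, lim_{n→∞} E(L_n(α))/n = Σ_{j=1}^∞ j^α γ² (1−γ)^{j−1}. -/
open MeasureTheory ProbabilityTheory Filter Topology

/-- The random walk: `S 0 = 0` and `S n = X 1 + ⋯ + X n` (steps indexed from `0`). -/
def walk {Ω : Type*} {d : ℕ} (X : ℕ → Ω → (Fin d → ℤ)) (n : ℕ) (ω : Ω) : Fin d → ℤ :=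
  ∑ i ∈ Finset.range n, X i ω

/-- The local time `ℓ(n,x) = #{0 ≤ i ≤ n : S i = x}`. -/
def localTime {Ω : Type*} {d : ℕ} (X : ℕ → Ω → (Fin d → ℤ)) (n : ℕ) (x : Fin d → ℤ)
    (ω : Ω) : ℕ :=
  ((Finset.range (n + 1)).filter fun i => walk X i ω = x).card

/-- The set of points visited by time `n`. -/
def visited {Ω : Type*} {d : ℕ} (X : ℕ → Ω → (Fin d → ℤ)) (n : ℕ) (ω : Ω) :
    Finset (Fin d → ℤ) :=
  (Finset.range (n + 1)).image fun i => walk X i ω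

/-- The steps are i.i.d.: measurable, independent and identically distributed. -/
def IID {Ω : Type*} {d : ℕ} [MeasurableSpace Ω] (P : Measure Ω)
    (X : ℕ → Ω → (Fin d → ℤ)) : Prop :=
  (∀ i, Measurable (X i)) ∧ iIndepFun X P ∧
    ∀ i, IdentDistrib (X i) (X 0) P P

/-- `L_n(α) = ∑_{x ∈ ℤ^d} ℓ(n,x)^α`, with the convention `0^0 = 0`, so that the sum may be
restricted to the (finitely many) visited points, where the local time is positive. -/
noncomputable def Lfun {Ω : Type*} {d : ℕ} (X : ℕ → Ω → (Fin d → ℤ)) (α : ℝ) (n : ℕ)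
    (ω : Ω) : ℝ :=
  ∑ x ∈ visited X n ω, (localTime X n x ω : ℝ) ^ α

namespace St5Aux

lemma meas_all {β : Type*} [MeasurableSpace β] [Countable β] [MeasurableSingletonClass β]
    (s : Set β) : MeasurableSet s := (Set.to_countable s).measurableSet

lemma meas_fun {β γ : Type*} [MeasurableSpace β] [Countable β] [MeasurableSingletonClass β]
    [MeasurableSpace γ] (f : β → γ) : Measurable f := fun _ _ => meas_all _


def blk {Ω : Type*} {d : ℕ} (X : ℕ → Ω → (Fin d → ℤ)) (i m : ℕ) (ω : Ω) :
    Fin m → (Fin d → ℤ) := fun k => X (i + (k : ℕ)) ω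

/-- number of "returns" within a block of `m` increments -/
def Rcnt {d : ℕ} (m : ℕ) (v : Fin m → (Fin d → ℤ)) : ℕ :=
  ((Finset.Icc 1 m).filter fun k => (∑ t : Fin m, if (t : ℕ) < k then v t else 0) = 0).card

/-- tuples whose walk is at a fresh point at the end -/
def FrSet (d i : ℕ) : Set (Fin i → (Fin d → ℤ)) :=
  {v | ∀ j < i, (∑ t : Fin i, if j ≤ (t : ℕ) then v t else 0) ≠ 0}

/-- tuples whose walk returns to the origin for the first time at time `k` -/
def Tset (d k : ℕ) : Set (Fin k → (Fin d → ℤ)) :=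
  {v | (∑ t : Fin k, v t) = 0 ∧ ∀ s, 1 ≤ s → s < k → (∑ t : Fin k, if (t : ℕ) < s then v t else 0) ≠ 0}

section Det
variable {Ω : Type*} {d : ℕ} (X : ℕ → Ω → (Fin d → ℤ)) (ω : Ω)

lemma walk_zero : walk X 0 ω = 0 := by simp [walk]

lemma sum_Ico_walk (i k : ℕ) : ∑ t ∈ Finset.Ico i (i + k), X t ω = walk X (i + k) ω - walk X i ω := by
  rw [Finset.sum_Ico_eq_sub _ (Nat.le_add_right i k)]; rfl

lemma sum_blk_lt (i m k : ℕ) (hk : k ≤ m) :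
    (∑ t : Fin m, if (t : ℕ) < k then blk X i m ω t else 0)
      = walk X (i + k) ω - walk X i ω := by
  simp only [blk]
  rw [Fin.sum_univ_eq_sum_range (fun t => if t < k then X (i + t) ω else 0) m]
  rw [← Finset.sum_filter]
  have h1 : (Finset.range m).filter (fun t => t < k) = Finset.range k := by
    ext t; simp only [Finset.mem_filter, Finset.mem_range]; omega
  rw [h1, ← sum_Ico_walk X ω i k, Finset.sum_Ico_eq_sum_range]
  simp

lemma sum_blk_ge (i j : ℕ) (hj : j ≤ i) :
    (∑ t : Fin i, if j ≤ (t : ℕ) then blk X 0 i ω t else 0)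
      = walk X i ω - walk X j ω := by
  simp only [blk]
  rw [Fin.sum_univ_eq_sum_range (fun t => if j ≤ t then X (0 + t) ω else 0) i]
  rw [← Finset.sum_filter]
  have h1 : (Finset.range i).filter (fun t => j ≤ t) = Finset.Ico j i := by
    ext t; simp only [Finset.mem_filter, Finset.mem_range, Finset.mem_Ico]; omega
  rw [h1, Finset.sum_Ico_eq_sub _ hj]
  simp [walk]

lemma sum_blk_all (i k : ℕ) :
    (∑ t : Fin k, blk X i k ω t) = walk X (i + k) ω - walk X i ω := by
  rw [← sum_blk_lt X ω i k k le_rfl]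
  refine Finset.sum_congr rfl fun t _ => ?_
  rw [if_pos t.isLt]

lemma mem_FrSet (i : ℕ) :
    blk X 0 i ω ∈ FrSet d i ↔ ∀ j < i, walk X j ω ≠ walk X i ω := by
  unfold FrSet
  simp only [Set.mem_setOf_eq]
  refine forall_congr' fun j => imp_congr_right fun hj => ?_
  rw [sum_blk_ge X ω i j hj.le, sub_ne_zero]
  exact ne_comm

lemma Rcnt_blk (i m : ℕ) :
    Rcnt m (blk X i m ω)
      = ((Finset.Icc 1 m).filter fun k => walk X (i + k) ω = walk X i ω).card := by
  unfold Rcnt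
  congr 1
  refine Finset.filter_congr fun k hk => ?_
  rw [Finset.mem_Icc] at hk
  rw [sum_blk_lt X ω i m k hk.2, sub_eq_zero]

lemma Rcnt_blk_mono (i : ℕ) {m m' : ℕ} (h : m ≤ m') :
    Rcnt m (blk X i m ω) ≤ Rcnt m' (blk X i m' ω) := by
  rw [Rcnt_blk, Rcnt_blk]
  exact Finset.card_le_card (Finset.filter_subset_filter _ (Finset.Icc_subset_Icc_right h))

lemma mem_Tset (k : ℕ) :
    blk X 0 k ω ∈ Tset d k ↔ walk X k ω = 0 ∧ ∀ s, 1 ≤ s → s < k → walk X s ω ≠ 0 := by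
  have hall : (∑ t : Fin k, blk X 0 k ω t) = walk X k ω := by
    rw [sum_blk_all X ω 0 k, walk_zero, sub_zero, Nat.zero_add]
  have hs : ∀ s, s ≤ k → (∑ t : Fin k, if (t : ℕ) < s then blk X 0 k ω t else 0) = walk X s ω :=
    fun s h => by rw [sum_blk_lt X ω 0 k s h, walk_zero, sub_zero, Nat.zero_add]
  unfold Tset
  simp only [Set.mem_setOf_eq, hall]
  exact and_congr Iff.rfl (forall_congr' fun s => imp_congr_right fun h1 =>
    imp_congr_right fun h2 => by rw [hs s h2.le])

lemma localTime_fresh (n i : ℕ) (hi : i ≤ n) (hf : ∀ j < i, walk X j ω ≠ walk X i ω) :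
    localTime X n (walk X i ω) ω = Rcnt (n - i) (blk X i (n - i) ω) + 1 := by
  classical
  rw [Rcnt_blk]
  unfold localTime
  have h1 : (Finset.range (n+1)).filter (fun s => walk X s ω = walk X i ω)
      = insert i ((Finset.Icc (i+1) n).filter fun s => walk X s ω = walk X i ω) := by
    ext s
    simp only [Finset.mem_filter, Finset.mem_range, Finset.mem_insert, Finset.mem_Icc]
    constructor
    · rintro ⟨hs, hw⟩
      rcases lt_trichotomy s i with h|h|h
      · exact absurd hw (hf s h)
      · left; exact h
      · right; exact ⟨⟨h, by omega⟩, hw⟩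
    · rintro (rfl | ⟨⟨hh1, hh2⟩, hw⟩)
      · exact ⟨by omega, rfl⟩
      · exact ⟨by omega, hw⟩
  rw [h1, Finset.card_insert_of_notMem (by simp only [Finset.mem_filter, Finset.mem_Icc]; omega)]
  congr 1
  refine Finset.card_bij (fun s _ => s - i) ?_ ?_ ?_
  · intro a ha
    simp only [Finset.mem_filter, Finset.mem_Icc] at ha ⊢
    refine ⟨by omega, ?_⟩
    rw [show i + (a - i) = a by omega]
    exact ha.2
  · intro a ha b hb hab
    simp only [Finset.mem_filter, Finset.mem_Icc] at ha hb
    omega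
  · intro b hb
    simp only [Finset.mem_filter, Finset.mem_Icc] at hb
    exact ⟨i + b, by simp only [Finset.mem_filter, Finset.mem_Icc]; exact ⟨by omega, hb.2⟩,
      by omega⟩

lemma Lfun_decomp (α : ℝ) (n : ℕ) :
    Lfun X α n ω = ∑ i ∈ Finset.range (n+1),
      Set.indicator (FrSet d i) (fun _ => (1:ℝ)) (blk X 0 i ω)
        * ((Rcnt (n-i) (blk X i (n-i) ω) : ℝ) + 1) ^ α := by
  classical
  have hind : ∀ i ∈ Finset.range (n+1), Set.indicator (FrSet d i) (fun _ => (1:ℝ)) (blk X 0 i ω)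
      * ((Rcnt (n-i) (blk X i (n-i) ω) : ℝ) + 1) ^ α
      = if (∀ j < i, walk X j ω ≠ walk X i ω)
          then ((Rcnt (n-i) (blk X i (n-i) ω) : ℝ) + 1) ^ α else 0 := by
    intro i _
    by_cases h : blk X 0 i ω ∈ FrSet d i
    · rw [Set.indicator_of_mem h, if_pos ((mem_FrSet X ω i).1 h), one_mul]
    · rw [Set.indicator_of_notMem h, if_neg (fun hh => h ((mem_FrSet X ω i).2 hh)), zero_mul]
  rw [Finset.sum_congr rfl hind, ← Finset.sum_filter]
  unfold Lfun
  refine (Finset.sum_bij (fun i _ => walk X i ω) ?_ ?_ ?_ ?_).symm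
  · intro a ha
    simp only [Finset.mem_filter, Finset.mem_range] at ha
    exact Finset.mem_image.2 ⟨a, Finset.mem_range.2 ha.1, rfl⟩
  · intro a ha b hb hab
    simp only [Finset.mem_filter, Finset.mem_range] at ha hb
    by_contra hne
    rcases lt_or_gt_of_ne hne with h | h
    · exact hb.2 a h hab
    · exact ha.2 b h hab.symm
  · intro x hx
    obtain ⟨i, hi, hwx⟩ := Finset.mem_image.1 hx
    rw [Finset.mem_range] at hi
    have hex : ∃ s, walk X s ω = x := ⟨i, hwx⟩
    set i₀ := Nat.find hex with hi₀
    have hsp : walk X i₀ ω = x := Nat.find_spec hex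
    have hle : i₀ ≤ i := Nat.find_min' hex hwx
    refine ⟨i₀, ?_, hsp⟩
    simp only [Finset.mem_filter, Finset.mem_range]
    refine ⟨by omega, fun j hj hw => ?_⟩
    exact Nat.find_min hex hj (hw.trans hsp)
  · intro a ha
    simp only [Finset.mem_filter, Finset.mem_range] at ha
    rw [localTime_fresh X ω n a (by omega) ha.2]
    push_cast
    ring_nf

lemma Rcnt_blk0 (m : ℕ) :
    Rcnt m (blk X 0 m ω) = ((Finset.Icc 1 m).filter fun s => walk X s ω = 0).card := by
  rw [Rcnt_blk]
  congr 1
  refine Finset.filter_congr fun k _ => ?_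
  rw [walk_zero, Nat.zero_add]

lemma Rcnt_split (m k : ℕ) (hk1 : 1 ≤ k) (hkm : k ≤ m) (hT : blk X 0 k ω ∈ Tset d k) :
    Rcnt m (blk X 0 m ω) = Rcnt (m - k) (blk X k (m - k) ω) + 1 := by
  classical
  obtain ⟨hw, hfr⟩ := (mem_Tset X ω k).1 hT
  rw [Rcnt_blk0, Rcnt_blk]
  have h1 : (Finset.Icc 1 m).filter (fun s => walk X s ω = 0)
      = insert k ((Finset.Icc (k+1) m).filter fun s => walk X s ω = 0) := by
    ext s
    simp only [Finset.mem_filter, Finset.mem_Icc, Finset.mem_insert]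
    constructor
    · rintro ⟨⟨hs1, hs2⟩, hs0⟩
      rcases lt_trichotomy s k with h|h|h
      · exact absurd hs0 (hfr s hs1 h)
      · left; exact h
      · right; exact ⟨⟨by omega, hs2⟩, hs0⟩
    · rintro (rfl | ⟨⟨hh1, hh2⟩, h0⟩)
      · exact ⟨⟨hk1, hkm⟩, hw⟩
      · exact ⟨⟨by omega, hh2⟩, h0⟩
  rw [h1, Finset.card_insert_of_notMem (by simp only [Finset.mem_filter, Finset.mem_Icc]; omega)]
  congr 1
  refine (Finset.card_bij (fun s _ => k + s) ?_ ?_ ?_).symm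
  · intro a ha
    simp only [Finset.mem_filter, Finset.mem_Icc] at ha ⊢
    obtain ⟨⟨ha1, ha2⟩, ha0⟩ := ha
    rw [hw] at ha0
    refine ⟨by omega, ?_⟩
    rw [← sub_eq_zero] at ha0 ⊢
    simpa using ha0
  · intro a _ b _ hab
    omega
  · intro b hb
    simp only [Finset.mem_filter, Finset.mem_Icc] at hb
    refine ⟨b - k, ?_, by omega⟩
    simp only [Finset.mem_filter, Finset.mem_Icc]
    refine ⟨by omega, ?_⟩
    rw [show k + (b - k) = b by omega, hb.2, hw]

lemma Tset_unique (k k' : ℕ) (hk : 1 ≤ k) (hk' : 1 ≤ k')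
    (hT : blk X 0 k ω ∈ Tset d k) (hT' : blk X 0 k' ω ∈ Tset d k') : k = k' := by
  obtain ⟨hw, hfr⟩ := (mem_Tset X ω k).1 hT
  obtain ⟨hw', hfr'⟩ := (mem_Tset X ω k').1 hT'
  by_contra hne
  rcases lt_or_gt_of_ne hne with h | h
  · exact hfr' k hk h hw
  · exact hfr k' hk' h hw'

lemma decomp_iff (m j : ℕ) :
    (j + 1 ≤ Rcnt m (blk X 0 m ω)) ↔
      ∃ k ∈ Finset.Icc 1 m, blk X 0 k ω ∈ Tset d k
        ∧ j ≤ Rcnt (m - k) (blk X k (m - k) ω) := by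
  constructor
  · intro hj
    have hne : ((Finset.Icc 1 m).filter fun s => walk X s ω = 0).Nonempty := by
      rw [← Finset.card_pos]
      rw [Rcnt_blk0] at hj
      omega
    obtain ⟨s₀, hs₀⟩ := hne
    simp only [Finset.mem_filter, Finset.mem_Icc] at hs₀
    have hex : ∃ s, 1 ≤ s ∧ s ≤ m ∧ walk X s ω = 0 := ⟨s₀, hs₀.1.1, hs₀.1.2, hs₀.2⟩
    set k := Nat.find hex with hk
    obtain ⟨hk1, hkm, hk0⟩ := Nat.find_spec hex
    have hT : blk X 0 k ω ∈ Tset d k := by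
      rw [mem_Tset]
      exact ⟨hk0, fun s hs1 hs2 h0 => Nat.find_min hex hs2 ⟨hs1, by omega, h0⟩⟩
    have := Rcnt_split X ω m k hk1 hkm hT
    exact ⟨k, Finset.mem_Icc.2 ⟨hk1, hkm⟩, hT, by omega⟩
  · rintro ⟨k, hkmem, hT, hj⟩
    rw [Finset.mem_Icc] at hkmem
    have := Rcnt_split X ω m k hkmem.1 hkmem.2 hT
    omega


def NRSet (d i : ℕ) : Set (Fin i → (Fin d → ℤ)) :=
  {v | ∀ k, 1 ≤ k → k ≤ i → (∑ t : Fin i, if (t : ℕ) < k then v t else 0) ≠ 0}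

lemma mem_NRSet_blk (i : ℕ) :
    blk X 0 i ω ∈ NRSet d i ↔ ∀ k, 1 ≤ k → k ≤ i → walk X k ω ≠ 0 := by
  unfold NRSet
  simp only [Set.mem_setOf_eq]
  refine forall_congr' fun k => imp_congr_right fun h1 => imp_congr_right fun h2 => ?_
  rw [sum_blk_lt X ω 0 i k h2, walk_zero, sub_zero, Nat.zero_add]

lemma Rcnt_le (m : ℕ) (v : Fin m → (Fin d → ℤ)) : Rcnt m v ≤ m :=
  le_trans (Finset.card_filter_le _ _) (by simp [Nat.card_Icc])


end Det

lemma rev_FrSet {d : ℕ} (i : ℕ) (v : Fin i → (Fin d → ℤ)) :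
    v ∈ FrSet d i ↔ (fun t : Fin i => v t.rev) ∈ NRSet d i := by
  unfold FrSet NRSet
  simp only [Set.mem_setOf_eq]
  have key : ∀ k, 1 ≤ k → k ≤ i →
      (∑ t : Fin i, if (t : ℕ) < k then v t.rev else 0)
        = ∑ t : Fin i, if (i - k) ≤ (t : ℕ) then v t else 0 := by
    intro k hk1 hk2
    rw [← Equiv.sum_comp (Fin.revPerm (n := i))
      (fun t : Fin i => if (t : ℕ) < k then v t.rev else 0)]
    refine Finset.sum_congr rfl fun t _ => ?_
    have ht := t.isLt
    simp only [Fin.revPerm_apply, Fin.rev_rev]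
    have hcond : ((t.rev : ℕ) < k) ↔ ((i - k) ≤ (t : ℕ)) := by
      rw [Fin.val_rev]; omega
    by_cases h : (i - k) ≤ (t : ℕ)
    · rw [if_pos (hcond.2 h), if_pos h]
    · rw [if_neg (fun hh => h (hcond.1 hh)), if_neg h]
  constructor
  · intro h k hk1 hk2
    rw [key k hk1 hk2]
    exact h (i - k) (by omega)
  · intro h j hj
    have := h (i - j) (by omega) (by omega)
    rw [key (i - j) (by omega) (by omega), show i - (i - j) = j by omega] at this
    exact this

section PDefs
variable {Ω : Type*} [MeasurableSpace Ω] {d : ℕ}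

noncomputable def qP (P : Measure Ω) (X : ℕ → Ω → (Fin d → ℤ)) (i : ℕ) : ℝ :=
  (P (blk X 0 i ⁻¹' FrSet d i)).toReal

noncomputable def fP (P : Measure Ω) (X : ℕ → Ω → (Fin d → ℤ)) (k : ℕ) : ℝ :=
  (P (blk X 0 k ⁻¹' Tset d k)).toReal

def Uev (X : ℕ → Ω → (Fin d → ℤ)) (j m : ℕ) : Set Ω :=
  blk X 0 m ⁻¹' {v | j ≤ Rcnt m v}

noncomputable def uP (P : Measure Ω) (X : ℕ → Ω → (Fin d → ℤ)) (j m : ℕ) : ℝ :=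
  (P (Uev X j m)).toReal

noncomputable def rP (P : Measure Ω) (X : ℕ → Ω → (Fin d → ℤ)) (j : ℕ) : ℝ :=
  (P (⋃ m, Uev X j m)).toReal

noncomputable def eP (P : Measure Ω) (X : ℕ → Ω → (Fin d → ℤ)) (α : ℝ) (m : ℕ) : ℝ :=
  ∫ ω, ((Rcnt m (blk X 0 m ω) : ℝ) + 1) ^ α ∂P

end PDefs

noncomputable def Gg (α : ℝ) (j : ℕ) : ℝ := ((j : ℝ) + 1) ^ α

lemma Gg_nonneg (α : ℝ) (j : ℕ) : 0 ≤ Gg α j := Real.rpow_nonneg (by positivity) α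

lemma Gg_mono (α : ℝ) (hα : 0 ≤ α) (j : ℕ) : Gg α j ≤ Gg α (j+1) := by
  unfold Gg
  refine Real.rpow_le_rpow (by positivity) (by push_cast; linarith) hα

lemma Gg_zero (α : ℝ) : Gg α 0 = 1 := by
  unfold Gg
  norm_num

lemma summable_Gg (α : ℝ) (hα : 0 ≤ α) {x : ℝ} (hx0 : 0 < x) (hx1 : x < 1) :
    Summable (fun k : ℕ => Gg α k * x ^ k) := by
  set K := ⌈α⌉₊ with hK
  have hbase : Summable (fun k : ℕ => ((k : ℝ))^K * x^k) :=
    summable_pow_mul_geometric_of_norm_lt_one K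
      (by rw [Real.norm_eq_abs, abs_of_pos hx0]; exact hx1)
  have hshift : Summable (fun k : ℕ => (((k+1 : ℕ)) : ℝ)^K * x^(k+1)) :=
    (summable_nat_add_iff (f := fun k : ℕ => ((k : ℝ))^K * x^k) 1).2 hbase
  have h2 : Summable (fun k : ℕ => ((k:ℝ)+1)^K * x^k) := by
    have h3 := hshift.mul_right x⁻¹
    refine h3.congr fun k => ?_
    push_cast
    rw [pow_succ]
    field_simp
  refine Summable.of_nonneg_of_le
    (fun k => mul_nonneg (Gg_nonneg _ _) (pow_nonneg hx0.le k)) (fun k => ?_) h2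
  refine mul_le_mul_of_nonneg_right ?_ (pow_nonneg hx0.le k)
  unfold Gg
  calc ((k:ℝ)+1) ^ α ≤ ((k:ℝ)+1) ^ (K : ℝ) :=
        Real.rpow_le_rpow_of_exponent_le (by linarith [Nat.cast_nonneg (α := ℝ) k])
          (Nat.le_ceil α)
    _ = ((k:ℝ)+1) ^ K := Real.rpow_natCast _ K

lemma summable_dG (α : ℝ) (hα : 0 ≤ α) {x : ℝ} (hx0 : 0 < x) (hx1 : x < 1) :
    Summable (fun k : ℕ => (Gg α (k+1) - Gg α k) * x^(k+1)) := by
  have hS1 : Summable (fun k : ℕ => Gg α (k+1) * x^(k+1)) :=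
    (summable_nat_add_iff (f := fun k : ℕ => Gg α k * x^k) 1).2 (summable_Gg α hα hx0 hx1)
  refine Summable.of_nonneg_of_le
    (fun k => mul_nonneg (by linarith [Gg_mono α hα k]) (pow_nonneg hx0.le _))
    (fun k => ?_) hS1
  refine mul_le_mul_of_nonneg_right ?_ (pow_nonneg hx0.le _)
  linarith [Gg_nonneg α k]

noncomputable def cP (α γ : ℝ) : ℝ := 1 + ∑' k : ℕ, (Gg α (k+1) - Gg α k) * (1-γ)^(k+1)


section Prob
variable {Ω : Type*} [MeasurableSpace Ω] {P : Measure Ω} [IsProbabilityMeasure P]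
  {d : ℕ} {X : ℕ → Ω → (Fin d → ℤ)}

lemma meas_blk (hX : ∀ i, Measurable (X i)) (i m : ℕ) : Measurable (blk X i m) :=
  measurable_pi_lambda _ (fun k => hX _)

lemma law_tuple (hiid : IID P X) {m : ℕ} (σ : Fin m → ℕ) (hσ : Function.Injective σ) :
    Measure.map (fun ω (k : Fin m) => X (σ k) ω) P
      = Measure.pi (fun _ => Measure.map (X 0) P) := by
  classical
  haveI : IsProbabilityMeasure (Measure.map (X 0) P) :=
    Measure.isProbabilityMeasure_map (hiid.1 0).aemeasurable
  have hT : Measurable (fun ω (k : Fin m) => X (σ k) ω) :=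
    measurable_pi_lambda _ (fun k => hiid.1 _)
  refine (Measure.pi_eq fun s hs => ?_).symm
  rw [Measure.map_apply hT (MeasurableSet.univ_pi fun i => meas_all _)]
  set sets : ℕ → Set (Fin d → ℤ) := fun n =>
    if h : ∃ k, σ k = n then s h.choose else Set.univ with hsets
  have hset : ∀ k : Fin m, sets (σ k) = s k := by
    intro k
    have h : ∃ k', σ k' = σ k := ⟨k, rfl⟩
    simp only [hsets, dif_pos h]
    exact congrArg s (hσ h.choose_spec)
  have hpre : (fun ω (k : Fin m) => X (σ k) ω) ⁻¹' (Set.univ.pi s)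
      = ⋂ n ∈ Finset.image σ Finset.univ, X n ⁻¹' sets n := by
    rw [Finset.set_biInter_finset_image]
    ext ω
    simp only [Set.mem_preimage, Set.mem_pi, Set.mem_univ, forall_true_left, Set.mem_iInter,
      Finset.mem_univ, hset]
  rw [hpre, hiid.2.1.measure_inter_preimage_eq_mul _ (fun i _ => meas_all _),
    Finset.prod_image (fun a _ b _ h => hσ h)]
  refine Finset.prod_congr rfl fun k _ => ?_
  rw [hset, ← Measure.map_apply (hiid.1 _) (meas_all _), (hiid.2.2 (σ k)).map_eq]

lemma identDistrib_tuple (hiid : IID P X) {m : ℕ} (σ τ : Fin m → ℕ)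
    (hσ : Function.Injective σ) (hτ : Function.Injective τ) :
    IdentDistrib (fun ω (k : Fin m) => X (σ k) ω) (fun ω (k : Fin m) => X (τ k) ω) P P :=
  ⟨(measurable_pi_lambda _ (fun k => hiid.1 _)).aemeasurable,
   (measurable_pi_lambda _ (fun k => hiid.1 _)).aemeasurable,
   by rw [law_tuple hiid σ hσ, law_tuple hiid τ hτ]⟩

lemma identDistrib_blk (hiid : IID P X) (i m : ℕ) :
    IdentDistrib (blk X i m) (blk X 0 m) P P := by
  exact identDistrib_tuple hiid (fun k : Fin m => i + (k : ℕ)) (fun k : Fin m => 0 + (k : ℕ))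
    (fun a b h => Fin.ext (by simp only [add_right_inj] at h; exact_mod_cast h))
    (fun a b h => Fin.ext (by simp only [add_right_inj] at h; exact_mod_cast h))

lemma indepFun_blk (hiid : IID P X) (i m : ℕ) :
    IndepFun (blk X 0 i) (blk X i m) P := by
  classical
  have hdisj : Disjoint (Finset.range i) (Finset.Ico i (i + m)) := by
    simp only [Finset.disjoint_left, Finset.mem_range, Finset.mem_Ico]
    omega
  have h := hiid.2.1.indepFun_finset (Finset.range i) (Finset.Ico i (i + m)) hdisj hiid.1
  set φ : ((j : (Finset.range i : Finset ℕ)) → (Fin d → ℤ)) → (Fin i → (Fin d → ℤ)) :=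
    fun w k => w ⟨(k : ℕ), by simp [k.isLt]⟩ with hφ
  set ψ : ((j : (Finset.Ico i (i + m) : Finset ℕ)) → (Fin d → ℤ)) → (Fin m → (Fin d → ℤ)) :=
    fun w k => w ⟨i + (k : ℕ), by simp [Finset.mem_Ico]⟩ with hψ
  have h2 := h.comp (φ := φ) (ψ := ψ) (meas_fun φ) (meas_fun ψ)
  have e1 : φ ∘ (fun a (j : (Finset.range i : Finset ℕ)) => X j a) = blk X 0 i := by
    funext ω k; simp [hφ, blk, Function.comp]
  have e2 : ψ ∘ (fun a (j : (Finset.Ico i (i + m) : Finset ℕ)) => X j a) = blk X i m := by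
    funext ω k; simp [hψ, blk, Function.comp]
  rwa [e1, e2] at h2

lemma indep_blocks (hiid : IID P X) (i m : ℕ) (A : Set (Fin i → (Fin d → ℤ)))
    (B : Set (Fin m → (Fin d → ℤ))) :
    P (blk X 0 i ⁻¹' A ∩ blk X i m ⁻¹' B)
      = P (blk X 0 i ⁻¹' A) * P (blk X 0 m ⁻¹' B) := by
  rw [(indepFun_blk hiid i m).measure_inter_preimage_eq_mul A B (meas_all _) (meas_all _),
    (identDistrib_blk hiid i m).measure_mem_eq (meas_all B)]

lemma integrable_of_bound {f : Ω → ℝ} (hf : Measurable f) (C : ℝ) (hC : ∀ ω, |f ω| ≤ C) :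
    Integrable f P :=
  (integrable_const C).mono' hf.aestronglyMeasurable
    (Filter.Eventually.of_forall (by simpa [Real.norm_eq_abs] using hC))

lemma indep_integral_mul (hiid : IID P X) (i m : ℕ) (F : (Fin i → (Fin d → ℤ)) → ℝ)
    (G : (Fin m → (Fin d → ℤ)) → ℝ) :
    ∫ ω, F (blk X 0 i ω) * G (blk X i m ω) ∂P
      = (∫ ω, F (blk X 0 i ω) ∂P) * ∫ ω, G (blk X 0 m ω) ∂P := by
  have h := ((indepFun_blk hiid i m).comp (meas_fun F) (meas_fun G)).integral_mul_eq_mul_integral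
    ((meas_fun F).comp (meas_blk hiid.1 0 i)).aestronglyMeasurable
    ((meas_fun G).comp (meas_blk hiid.1 i m)).aestronglyMeasurable
  have h2 : ∫ ω, G (blk X i m ω) ∂P = ∫ ω, G (blk X 0 m ω) ∂P :=
    ((identDistrib_blk hiid i m).comp (meas_fun G)).integral_eq
  calc ∫ ω, F (blk X 0 i ω) * G (blk X i m ω) ∂P
      = ∫ ω, ((F ∘ blk X 0 i) * (G ∘ blk X i m)) ω ∂P := rfl
    _ = (∫ ω, F (blk X 0 i ω) ∂P) * ∫ ω, G (blk X i m ω) ∂P := h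
    _ = _ := by rw [h2]


lemma term_eq_indicator (i m : ℕ) (α : ℝ) :
    (fun ω => Set.indicator (FrSet d i) (fun _ => (1:ℝ)) (blk X 0 i ω))
      = Set.indicator (blk X 0 i ⁻¹' FrSet d i) (fun _ => (1:ℝ)) := by
  funext ω
  by_cases h : blk X 0 i ω ∈ FrSet d i
  · rw [Set.indicator_of_mem h, Set.indicator_of_mem (by exact h)]
  · rw [Set.indicator_of_notMem h, Set.indicator_of_notMem (by exact h)]

lemma integral_term (hiid : IID P X) (α : ℝ) (i m : ℕ) :
    ∫ ω, Set.indicator (FrSet d i) (fun _ => (1:ℝ)) (blk X 0 i ω)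
        * ((Rcnt m (blk X i m ω) : ℝ) + 1) ^ α ∂P = qP P X i * eP P X α m := by
  have h := indep_integral_mul hiid i m (Set.indicator (FrSet d i) (fun _ => (1:ℝ)))
    (fun v => ((Rcnt m v : ℝ) + 1) ^ α)
  rw [h]
  congr 1
  rw [show (fun ω => Set.indicator (FrSet d i) (fun _ => (1:ℝ)) (blk X 0 i ω))
      = Set.indicator (blk X 0 i ⁻¹' FrSet d i) (fun _ => (1:ℝ)) from term_eq_indicator i m α]
  rw [integral_indicator_const (1:ℝ) ((meas_blk hiid.1 0 i) (meas_all _))]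
  rw [smul_eq_mul, mul_one]
  rfl

lemma term_abs_bound (α : ℝ) (hα : 0 ≤ α) (i m : ℕ) (ω : Ω) :
    |Set.indicator (FrSet d i) (fun _ => (1:ℝ)) (blk X 0 i ω)
        * ((Rcnt m (blk X i m ω) : ℝ) + 1) ^ α| ≤ ((m : ℝ) + 1) ^ α := by
  rw [abs_mul]
  have h1 : |Set.indicator (FrSet d i) (fun _ => (1:ℝ)) (blk X 0 i ω)| ≤ 1 := by
    by_cases h : blk X 0 i ω ∈ FrSet d i
    · rw [Set.indicator_of_mem h]; norm_num
    · rw [Set.indicator_of_notMem h]; norm_num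
  have h2 : |((Rcnt m (blk X i m ω) : ℝ) + 1) ^ α| ≤ ((m : ℝ) + 1) ^ α := by
    rw [abs_of_nonneg (Real.rpow_nonneg (by positivity) α)]
    refine Real.rpow_le_rpow (by positivity) ?_ hα
    have h3 := Rcnt_le m (blk X i m ω)
    have : ((Rcnt m (blk X i m ω) : ℝ)) ≤ (m : ℝ) := by exact_mod_cast h3
    linarith
  calc |Set.indicator (FrSet d i) (fun _ => (1:ℝ)) (blk X 0 i ω)|
        * |((Rcnt m (blk X i m ω) : ℝ) + 1) ^ α|
      ≤ 1 * (((m : ℝ) + 1) ^ α) := by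
        refine mul_le_mul h1 h2 (abs_nonneg _) zero_le_one
    _ = ((m : ℝ) + 1) ^ α := one_mul _

lemma integral_Lfun (hiid : IID P X) (α : ℝ) (hα : 0 ≤ α) (n : ℕ) :
    ∫ ω, Lfun X α n ω ∂P = ∑ i ∈ Finset.range (n+1), qP P X i * eP P X α (n-i) := by
  have h0 : ∫ ω, Lfun X α n ω ∂P = ∫ ω, (∑ i ∈ Finset.range (n+1),
      Set.indicator (FrSet d i) (fun _ => (1:ℝ)) (blk X 0 i ω)
        * ((Rcnt (n-i) (blk X i (n-i) ω) : ℝ) + 1) ^ α) ∂P :=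
    integral_congr_ae (Filter.Eventually.of_forall fun ω => Lfun_decomp X ω α n)
  rw [h0, integral_finset_sum]
  · exact Finset.sum_congr rfl fun i _ => integral_term hiid α i (n - i)
  · intro i _
    refine integrable_of_bound ?_ ((((n - i : ℕ) : ℝ) + 1) ^ α) ?_
    · exact Measurable.mul
        ((meas_fun (Set.indicator (FrSet d i) (fun _ => (1:ℝ)))).comp (meas_blk hiid.1 0 i))
        ((meas_fun (fun v => ((Rcnt (n-i) v : ℝ) + 1) ^ α)).comp (meas_blk hiid.1 i (n-i)))
    · exact fun ω => term_abs_bound α hα i (n - i) ω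

lemma qP_eq (hiid : IID P X) (i : ℕ) :
    qP P X i = (P (blk X 0 i ⁻¹' NRSet d i)).toReal := by
  unfold qP
  congr 1
  have hrev : blk X 0 i ⁻¹' FrSet d i
      = (fun ω (t : Fin i) => X (0 + (t.rev : ℕ)) ω) ⁻¹' NRSet d i := by
    ext ω
    simp only [Set.mem_preimage]
    rw [rev_FrSet]
    constructor
    · intro h; convert h using 2 <;> rfl
    · intro h; convert h using 2 <;> rfl
  rw [hrev]
  have hid := identDistrib_tuple hiid (fun t : Fin i => 0 + (t.rev : ℕ))
    (fun t : Fin i => 0 + (t : ℕ))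
    (fun a b h => by
      simp only [Nat.zero_add] at h
      exact Fin.rev_injective (Fin.ext h))
    (fun a b h => by
      simp only [Nat.zero_add] at h
      exact Fin.ext h)
  rw [hid.measure_mem_eq (meas_all _)]
  rfl

lemma qP_tendsto (hiid : IID P X) {γ : ℝ}
    (hγ : (P {ω | ∀ n, 1 ≤ n → walk X n ω ≠ 0}).toReal = γ) :
    Tendsto (qP P X) atTop (𝓝 γ) := by
  have hset : ∀ i, blk X 0 i ⁻¹' NRSet d i = {ω | ∀ k, 1 ≤ k → k ≤ i → walk X k ω ≠ 0} := by
    intro i; ext ω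
    simp only [Set.mem_preimage, Set.mem_setOf_eq]
    exact mem_NRSet_blk X ω i
  have hanti : Antitone (fun i => blk X 0 i ⁻¹' NRSet d i) := by
    intro i j hij
    simp only [hset i, hset j, Set.le_eq_subset]
    intro ω h k hk1 hk2
    exact h k hk1 (hk2.trans hij)
  have hiInter : (⋂ i, blk X 0 i ⁻¹' NRSet d i) = {ω | ∀ n, 1 ≤ n → walk X n ω ≠ 0} := by
    ext ω
    simp only [Set.mem_iInter, hset, Set.mem_setOf_eq]
    constructor
    · intro h n hn; exact h n n hn le_rfl
    · intro h i k hk1 _; exact h k hk1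
  have hmeas : ∀ i, NullMeasurableSet (blk X 0 i ⁻¹' NRSet d i) P :=
    fun i => ((meas_blk hiid.1 0 i) (meas_all _)).nullMeasurableSet
  have h1 := tendsto_measure_iInter_atTop (μ := P) hmeas hanti ⟨0, measure_ne_top P _⟩
  rw [hiInter] at h1
  have h2 := (ENNReal.tendsto_toReal (measure_ne_top P _)).comp h1
  rw [hγ] at h2
  have : ∀ i, qP P X i = (P (blk X 0 i ⁻¹' NRSet d i)).toReal := fun i => qP_eq hiid i
  exact Tendsto.congr (fun i => (this i).symm) h2


lemma Uev_mono (j : ℕ) : Monotone (fun m => Uev X j m) := by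
  intro m m' h ω hω
  exact le_trans hω (Rcnt_blk_mono X ω 0 h)

lemma Uev_measurable (hX : ∀ i, Measurable (X i)) (j m : ℕ) : MeasurableSet (Uev X j m) :=
  (meas_blk hX 0 m) (meas_all _)

lemma uP_nonneg (j m : ℕ) : 0 ≤ uP P X j m := ENNReal.toReal_nonneg

lemma uP_le_one (j m : ℕ) : uP P X j m ≤ 1 := by
  unfold uP
  rw [← ENNReal.toReal_one]
  exact ENNReal.toReal_mono (by norm_num) prob_le_one

lemma fP_nonneg (k : ℕ) : 0 ≤ fP P X k := ENNReal.toReal_nonneg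

lemma uP_le_rP (j m : ℕ) : uP P X j m ≤ rP P X j :=
  ENNReal.toReal_mono (measure_ne_top P _) (measure_mono (Set.subset_iUnion (fun m => Uev X j m) m))

lemma uP_tendsto (j : ℕ) : Tendsto (fun m => uP P X j m) atTop (𝓝 (rP P X j)) := by
  have h1 := tendsto_measure_iUnion_atTop (μ := P) (Uev_mono (X := X) j)
  have h2 := (ENNReal.tendsto_toReal (measure_ne_top P _)).comp h1
  exact h2

lemma uP_zero (m : ℕ) : uP P X 0 m = 1 := by
  unfold uP
  have : Uev X 0 m = Set.univ := by
    ext ω; simp [Uev]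
  rw [this, measure_univ, ENNReal.toReal_one]

lemma rP_zero : rP P X 0 = 1 := by
  unfold rP
  have : (⋃ m, Uev X 0 m) = Set.univ := by
    rw [Set.eq_univ_iff_forall]
    intro ω
    exact Set.mem_iUnion.2 ⟨0, by simp [Uev]⟩
  rw [this, measure_univ, ENNReal.toReal_one]

lemma uP_rec (hiid : IID P X) (j m : ℕ) :
    uP P X (j+1) m = ∑ k ∈ Finset.range m, fP P X (k+1) * uP P X j (m-(k+1)) := by
  classical
  have hdec : Uev X (j+1) m = ⋃ k ∈ Finset.Icc 1 m,
      ((blk X 0 k ⁻¹' Tset d k) ∩ (blk X k (m-k) ⁻¹' {v | j ≤ Rcnt (m-k) v})) := by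
    ext ω
    simp only [Uev, Set.mem_preimage, Set.mem_iUnion, Set.mem_inter_iff, Set.mem_setOf_eq,
      exists_prop]
    exact decomp_iff X ω m j
  have hdisj : ((Finset.Icc 1 m : Finset ℕ) : Set ℕ).PairwiseDisjoint
      (fun k => (blk X 0 k ⁻¹' Tset d k) ∩ (blk X k (m-k) ⁻¹' {v | j ≤ Rcnt (m-k) v})) := by
    intro a ha b hb hab
    simp only [Finset.coe_Icc, Set.mem_Icc] at ha hb
    refine Set.disjoint_left.2 fun ω hωa hωb => ?_
    exact hab (Tset_unique X ω a b ha.1 hb.1 hωa.1 hωb.1)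
  have hmeas : ∀ k ∈ Finset.Icc 1 m, MeasurableSet
      ((blk X 0 k ⁻¹' Tset d k) ∩ (blk X k (m-k) ⁻¹' {v | j ≤ Rcnt (m-k) v})) :=
    fun k _ => ((meas_blk hiid.1 0 k) (meas_all _)).inter ((meas_blk hiid.1 k (m-k)) (meas_all _))
  have h1 : uP P X (j+1) m = ∑ k ∈ Finset.Icc 1 m, fP P X k * uP P X j (m-k) := by
    unfold uP
    rw [hdec, measure_biUnion_finset hdisj hmeas,
      ENNReal.toReal_sum (fun k _ => measure_ne_top P _)]
    refine Finset.sum_congr rfl fun k _ => ?_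
    rw [indep_blocks hiid k (m-k) (Tset d k) {v | j ≤ Rcnt (m-k) v}, ENNReal.toReal_mul]
    rfl
  rw [h1, show Finset.Icc 1 m = Finset.Ico 1 (m+1) by rw [Finset.Ico_add_one_right_eq_Icc],
    Finset.sum_Ico_eq_sum_range]
  simp only [Nat.add_sub_cancel]
  exact Finset.sum_congr rfl fun k _ => by rw [Nat.add_comm 1 k]

lemma meas_walk (hX : ∀ i, Measurable (X i)) (n : ℕ) : Measurable (walk X n) := by
  have h : walk X n = (fun v : Fin n → (Fin d → ℤ) => ∑ t, v t) ∘ blk X 0 n := by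
    funext ω
    show walk X n ω = ∑ t, blk X 0 n ω t
    rw [sum_blk_all X ω 0 n, walk_zero, sub_zero, Nat.zero_add]
  rw [h]
  exact (meas_fun _).comp (meas_blk hX 0 n)

lemma meas_noret (hX : ∀ i, Measurable (X i)) :
    MeasurableSet {ω | ∀ n, 1 ≤ n → walk X n ω ≠ 0} := by
  have h : {ω | ∀ n, 1 ≤ n → walk X n ω ≠ 0}
      = ⋂ n, {ω | 1 ≤ n → walk X n ω ≠ 0} := by
    ext ω; simp
  rw [h]
  refine MeasurableSet.iInter fun n => ?_
  rcases Nat.eq_zero_or_pos n with hn | hn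
  · subst hn
    simp only [show ¬ (1 ≤ 0) by omega, false_implies]
    exact MeasurableSet.univ.congr (by ext ω; simp)
  · have : {ω | 1 ≤ n → walk X n ω ≠ 0} = (walk X n ⁻¹' {0})ᶜ := by
      ext ω; simp only [Set.mem_setOf_eq, Set.mem_compl_iff, Set.mem_preimage,
        Set.mem_singleton_iff]
      constructor
      · intro h; exact h (by omega)
      · intro h _; exact h
    rw [this]
    exact ((meas_walk hX n) (measurableSet_singleton 0)).compl

lemma fP_hasSum (hiid : IID P X) {γ : ℝ}
    (hγ : (P {ω | ∀ n, 1 ≤ n → walk X n ω ≠ 0}).toReal = γ) :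
    HasSum (fun k => fP P X (k+1)) (1 - γ) := by
  classical
  rw [hasSum_iff_tendsto_nat_of_nonneg (fun k => fP_nonneg (k+1)) (1 - γ)]
  have hdisjM : ∀ M : ℕ, ((Finset.range M : Finset ℕ) : Set ℕ).PairwiseDisjoint
      (fun k => blk X 0 (k+1) ⁻¹' Tset d (k+1)) := by
    intro M a _ b _ hab
    refine Set.disjoint_left.2 fun ω hωa hωb => ?_
    exact hab (by
      have := Tset_unique X ω (a+1) (b+1) (by omega) (by omega) hωa hωb
      omega)
  have hpart : ∀ M : ℕ, ∑ k ∈ Finset.range M, fP P X (k+1)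
      = (P (⋃ k ∈ Finset.range M, blk X 0 (k+1) ⁻¹' Tset d (k+1))).toReal := by
    intro M
    rw [measure_biUnion_finset (hdisjM M) (fun k _ => (meas_blk hiid.1 0 (k+1)) (meas_all _)),
      ENNReal.toReal_sum (fun k _ => measure_ne_top P _)]
    rfl
  have hmono : Monotone (fun M => ⋃ k ∈ Finset.range M, blk X 0 (k+1) ⁻¹' Tset d (k+1)) := by
    intro a b hab ω hω
    rw [Set.mem_iUnion₂] at hω ⊢
    obtain ⟨k, hk, h⟩ := hω
    rw [Finset.mem_range] at hk
    exact ⟨k, Finset.mem_range.2 (by omega), h⟩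
  have hU : (⋃ M, ⋃ k ∈ Finset.range M, blk X 0 (k+1) ⁻¹' Tset d (k+1))
      = {ω | ∀ n, 1 ≤ n → walk X n ω ≠ 0}ᶜ := by
    ext ω
    simp only [Set.mem_iUnion, Set.mem_compl_iff, Set.mem_setOf_eq, Set.mem_preimage, exists_prop,
      Finset.mem_range, not_forall, Classical.not_imp, not_not]
    constructor
    · rintro ⟨M, k, hkM, hT⟩
      obtain ⟨hw, -⟩ := (mem_Tset X ω (k+1)).1 hT
      exact ⟨k+1, by omega, hw⟩
    · rintro ⟨n, hn1, hn0⟩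
      have hex : ∃ s, 1 ≤ s ∧ walk X s ω = 0 := ⟨n, hn1, hn0⟩
      set k := Nat.find hex with hkdef
      obtain ⟨hk1, hk0⟩ := Nat.find_spec hex
      have hT : blk X 0 k ω ∈ Tset d k := by
        rw [mem_Tset]
        exact ⟨hk0, fun s hs1 hs2 h0 => Nat.find_min hex hs2 ⟨hs1, h0⟩⟩
      refine ⟨k, k - 1, by omega, ?_⟩
      rw [show k - 1 + 1 = k by omega]
      exact hT
  have h1 := tendsto_measure_iUnion_atTop (μ := P) hmono
  rw [hU] at h1
  have h2 := (ENNReal.tendsto_toReal (measure_ne_top P _)).comp h1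
  have h3 : (P ({ω | ∀ n, 1 ≤ n → walk X n ω ≠ 0}ᶜ)).toReal = 1 - γ := by
    rw [prob_compl_eq_one_sub (meas_noret hiid.1),
      ENNReal.toReal_sub_of_le prob_le_one ENNReal.one_ne_top, ENNReal.toReal_one, hγ]
  rw [h3] at h2
  refine Tendsto.congr (fun M => (hpart M).symm) h2

lemma rP_succ (hiid : IID P X) {γ : ℝ}
    (hγ : (P {ω | ∀ n, 1 ≤ n → walk X n ω ≠ 0}).toReal = γ) (j : ℕ) :
    rP P X (j+1) = (1-γ) * rP P X j := by
  have hfs := fP_hasSum hiid hγ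
  have heq : ∀ m, uP P X (j+1) m
      = ∑' k : ℕ, (if k + 1 ≤ m then fP P X (k+1) * uP P X j (m-(k+1)) else 0) := by
    intro m
    rw [uP_rec hiid j m,
      tsum_eq_sum (s := Finset.range m) (f := fun k =>
        (if k + 1 ≤ m then fP P X (k+1) * uP P X j (m-(k+1)) else 0))
        (fun k hk => by rw [Finset.mem_range] at hk; exact if_neg (by omega))]
    refine Finset.sum_congr rfl fun k hk => ?_
    rw [Finset.mem_range] at hk
    rw [if_pos (by omega)]
  have hlim : ∀ k : ℕ, Tendsto
      (fun m => if k + 1 ≤ m then fP P X (k+1) * uP P X j (m-(k+1)) else 0) atTop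
      (𝓝 (fP P X (k+1) * rP P X j)) := by
    intro k
    have h1 : Tendsto (fun m : ℕ => fP P X (k+1) * uP P X j (m-(k+1))) atTop
        (𝓝 (fP P X (k+1) * rP P X j)) :=
      tendsto_const_nhds.mul ((uP_tendsto j).comp (tendsto_sub_atTop_nat (k+1)))
    refine Tendsto.congr' ?_ h1
    filter_upwards [eventually_ge_atTop (k+1)] with m hm
    rw [if_pos hm]
  have hbd : ∀ᶠ (m : ℕ) in atTop, ∀ k : ℕ,
      ‖if k + 1 ≤ m then fP P X (k+1) * uP P X j (m-(k+1)) else 0‖ ≤ fP P X (k+1) := by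
    filter_upwards with m k
    by_cases h : k + 1 ≤ m
    · rw [if_pos h, Real.norm_eq_abs,
        abs_of_nonneg (mul_nonneg (fP_nonneg _) (uP_nonneg _ _))]
      calc fP P X (k+1) * uP P X j (m-(k+1)) ≤ fP P X (k+1) * 1 :=
            mul_le_mul_of_nonneg_left (uP_le_one _ _) (fP_nonneg _)
        _ = fP P X (k+1) := mul_one _
    · rw [if_neg h]
      simpa using fP_nonneg (P := P) (X := X) (k+1)
  have hkey := tendsto_tsum_of_dominated_convergence hfs.summable hlim hbd
  have h2 : ∑' k : ℕ, fP P X (k+1) * rP P X j = (1-γ) * rP P X j := by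
    rw [tsum_mul_right, hfs.tsum_eq]
  rw [h2] at hkey
  exact tendsto_nhds_unique ((uP_tendsto (j+1)).congr heq) hkey

lemma rP_eq (hiid : IID P X) {γ : ℝ}
    (hγ : (P {ω | ∀ n, 1 ≤ n → walk X n ω ≠ 0}).toReal = γ) (j : ℕ) :
    rP P X j = (1-γ)^j := by
  induction j with
  | zero => simpa using rP_zero (P := P) (X := X)
  | succ j ih => rw [rP_succ hiid hγ j, ih, pow_succ]; ring

lemma eP_formula (hiid : IID P X) (α : ℝ) (m : ℕ) :
    eP P X α m = 1 + ∑ k ∈ Finset.range m, (Gg α (k+1) - Gg α k) * uP P X (k+1) m := by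
  classical
  have hpt : ∀ ω, ((Rcnt m (blk X 0 m ω) : ℝ) + 1) ^ α
      = 1 + ∑ k ∈ Finset.range m,
          Set.indicator (Uev X (k+1) m) (fun _ => Gg α (k+1) - Gg α k) ω := by
    intro ω
    have hR : Rcnt m (blk X 0 m ω) ≤ m := Rcnt_le m _
    have h1 : ∀ k, Set.indicator (Uev X (k+1) m) (fun _ => Gg α (k+1) - Gg α k) ω
        = if k+1 ≤ Rcnt m (blk X 0 m ω) then Gg α (k+1) - Gg α k else 0 := by
      intro k
      by_cases h : ω ∈ Uev X (k+1) m
      · rw [Set.indicator_of_mem h,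
          if_pos (show k+1 ≤ Rcnt m (blk X 0 m ω) from h)]
      · rw [Set.indicator_of_notMem h,
          if_neg (show ¬ k+1 ≤ Rcnt m (blk X 0 m ω) from h)]
    rw [Finset.sum_congr rfl (fun k _ => h1 k)]
    have h2 : ∑ k ∈ Finset.range m,
        (if k+1 ≤ Rcnt m (blk X 0 m ω) then Gg α (k+1) - Gg α k else 0)
        = ∑ k ∈ Finset.range (Rcnt m (blk X 0 m ω)), (Gg α (k+1) - Gg α k) := by
      rw [← Finset.sum_filter]
      congr 1
      ext k
      simp only [Finset.mem_filter, Finset.mem_range]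
      omega
    rw [h2, Finset.sum_range_sub (Gg α), Gg_zero]
    show Gg α (Rcnt m (blk X 0 m ω)) = _
    ring
  unfold eP
  rw [integral_congr_ae (Filter.Eventually.of_forall hpt), integral_add (integrable_const 1)
    (integrable_finset_sum _ fun k _ =>
      (integrable_const (Gg α (k+1) - Gg α k)).indicator (Uev_measurable hiid.1 (k+1) m)),
    integral_const, integral_finset_sum _ (fun k _ =>
      (integrable_const (Gg α (k+1) - Gg α k)).indicator (Uev_measurable hiid.1 (k+1) m))]
  simp only [measure_univ, probReal_univ, ENNReal.toReal_one, smul_eq_mul, one_mul, one_smul]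
  congr 1
  refine Finset.sum_congr rfl fun k _ => ?_
  rw [integral_indicator_const _ (Uev_measurable hiid.1 (k+1) m), smul_eq_mul, mul_comm]
  rfl

lemma eP_le (hiid : IID P X) (α : ℝ) (hα : 0 ≤ α) {γ : ℝ}
    (hγ : (P {ω | ∀ n, 1 ≤ n → walk X n ω ≠ 0}).toReal = γ) (hγ0 : 0 < γ) (hγ1 : γ < 1)
    (m : ℕ) : eP P X α m ≤ cP α γ := by
  rw [eP_formula hiid α m]
  unfold cP
  have hx0 : (0:ℝ) < 1 - γ := by linarith
  have hx1 : (1:ℝ) - γ < 1 := by linarith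
  have hterm : ∀ k ∈ Finset.range m, (Gg α (k+1) - Gg α k) * uP P X (k+1) m
      ≤ (Gg α (k+1) - Gg α k) * (1-γ)^(k+1) := by
    intro k _
    refine mul_le_mul_of_nonneg_left ?_ (by linarith [Gg_mono α hα k])
    calc uP P X (k+1) m ≤ rP P X (k+1) := uP_le_rP _ _
      _ = (1-γ)^(k+1) := rP_eq hiid hγ (k+1)
  have h2 : ∑ k ∈ Finset.range m, (Gg α (k+1) - Gg α k) * (1-γ)^(k+1)
      ≤ ∑' k : ℕ, (Gg α (k+1) - Gg α k) * (1-γ)^(k+1) :=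
    Summable.sum_le_tsum _ (fun k _ => mul_nonneg (by linarith [Gg_mono α hα k]) (by positivity))
      (summable_dG α hα hx0 hx1)
  have h1 := Finset.sum_le_sum hterm
  linarith

lemma eP_nonneg (hiid : IID P X) (α : ℝ) (hα : 0 ≤ α) (m : ℕ) : 0 ≤ eP P X α m := by
  rw [eP_formula hiid α m]
  have : 0 ≤ ∑ k ∈ Finset.range m, (Gg α (k+1) - Gg α k) * uP P X (k+1) m :=
    Finset.sum_nonneg fun k _ =>
      mul_nonneg (by linarith [Gg_mono α hα k]) (uP_nonneg _ _)
  linarith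

lemma eP_tendsto (hiid : IID P X) (α : ℝ) (hα : 0 ≤ α) {γ : ℝ}
    (hγ : (P {ω | ∀ n, 1 ≤ n → walk X n ω ≠ 0}).toReal = γ) (hγ0 : 0 < γ) (hγ1 : γ < 1) :
    Tendsto (eP P X α) atTop (𝓝 (cP α γ)) := by
  classical
  have hx0 : (0:ℝ) < 1 - γ := by linarith
  have hx1 : (1:ℝ) - γ < 1 := by linarith
  have heq : ∀ m, eP P X α m = 1 + ∑' k : ℕ,
      (if k < m then (Gg α (k+1) - Gg α k) * uP P X (k+1) m else 0) := by
    intro m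
    rw [eP_formula hiid α m,
      tsum_eq_sum (s := Finset.range m) (f := fun k =>
        (if k < m then (Gg α (k+1) - Gg α k) * uP P X (k+1) m else 0))
        (fun k hk => by rw [Finset.mem_range] at hk; exact if_neg (by omega))]
    congr 1
    refine Finset.sum_congr rfl fun k hk => ?_
    rw [Finset.mem_range] at hk
    rw [if_pos hk]
  have hlim : ∀ k : ℕ, Tendsto
      (fun m => if k < m then (Gg α (k+1) - Gg α k) * uP P X (k+1) m else 0) atTop
      (𝓝 ((Gg α (k+1) - Gg α k) * rP P X (k+1))) := by
    intro k
    have h1 : Tendsto (fun m : ℕ => (Gg α (k+1) - Gg α k) * uP P X (k+1) m) atTop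
        (𝓝 ((Gg α (k+1) - Gg α k) * rP P X (k+1))) :=
      tendsto_const_nhds.mul (uP_tendsto (k+1))
    refine Tendsto.congr' ?_ h1
    filter_upwards [eventually_gt_atTop k] with m hm
    rw [if_pos hm]
  have hbd : ∀ᶠ (m : ℕ) in atTop, ∀ k : ℕ,
      ‖if k < m then (Gg α (k+1) - Gg α k) * uP P X (k+1) m else 0‖
        ≤ (Gg α (k+1) - Gg α k) * (1-γ)^(k+1) := by
    filter_upwards with m k
    have hΔ : 0 ≤ Gg α (k+1) - Gg α k := by linarith [Gg_mono α hα k]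
    by_cases h : k < m
    · rw [if_pos h, Real.norm_eq_abs, abs_of_nonneg (mul_nonneg hΔ (uP_nonneg _ _))]
      refine mul_le_mul_of_nonneg_left ?_ hΔ
      calc uP P X (k+1) m ≤ rP P X (k+1) := uP_le_rP _ _
        _ = (1-γ)^(k+1) := rP_eq hiid hγ (k+1)
    · rw [if_neg h]
      simpa using mul_nonneg hΔ (by positivity : (0:ℝ) ≤ (1-γ)^(k+1))
  have hkey := tendsto_tsum_of_dominated_convergence (summable_dG α hα hx0 hx1) hlim hbd
  have h2 : ∑' k : ℕ, (Gg α (k+1) - Gg α k) * rP P X (k+1)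
      = ∑' k : ℕ, (Gg α (k+1) - Gg α k) * (1-γ)^(k+1) :=
    tsum_congr fun k => by rw [rP_eq hiid hγ (k+1)]
  rw [h2] at hkey
  have := (tendsto_const_nhds (x := (1:ℝ))).add hkey
  refine Tendsto.congr (fun m => (heq m).symm) this

end Prob

lemma avg_shift {c : ℕ → ℝ} {C : ℝ}
    (h : Tendsto (fun n : ℕ => ((n:ℝ))⁻¹ * ∑ i ∈ Finset.range n, c i) atTop (𝓝 C)) :
    Tendsto (fun n : ℕ => (∑ i ∈ Finset.range (n+1), c i) / n) atTop (𝓝 C) := by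
  have hfrac : Tendsto (fun n : ℕ => ((n:ℝ)+1) / n) atTop (𝓝 1) := by
    have h0 : Tendsto (fun n : ℕ => 1 + ((n:ℝ))⁻¹) atTop (𝓝 (1+0)) :=
      tendsto_const_nhds.add tendsto_inv_atTop_nhds_zero_nat
    refine Tendsto.congr' ?_ (by simpa using h0)
    filter_upwards [eventually_ne_atTop 0] with n hn
    have hn' : (n:ℝ) ≠ 0 := Nat.cast_ne_zero.2 hn
    field_simp
  have hcomp := h.comp (tendsto_add_atTop_nat 1)
  have hmul := hfrac.mul hcomp
  refine Tendsto.congr (fun n => ?_) (by simpa using hmul)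
  rcases eq_or_ne n 0 with rfl | hn
  · norm_num
  · have hn' : (n:ℝ) ≠ 0 := Nat.cast_ne_zero.2 hn
    push_cast
    field_simp

lemma cesaro_conv {a b : ℕ → ℝ} {A B Cb : ℝ} (ha : Tendsto a atTop (𝓝 A))
    (hb : Tendsto b atTop (𝓝 B)) (hb0 : ∀ i, 0 ≤ b i) (hbC : ∀ i, b i ≤ Cb) :
    Tendsto (fun n : ℕ => (∑ i ∈ Finset.range (n+1), a i * b (n - i)) / n) atTop
      (𝓝 (A * B)) := by
  have hCb0 : 0 ≤ Cb := le_trans (hb0 0) (hbC 0)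
  have hdecomp : ∀ n : ℕ, (∑ i ∈ Finset.range (n+1), a i * b (n - i)) / n
      = (∑ i ∈ Finset.range (n+1), (a i - A) * b (n - i)) / n
        + A * ((∑ i ∈ Finset.range (n+1), b i) / n) := by
    intro n
    have h1 : ∑ i ∈ Finset.range (n+1), a i * b (n-i)
        = ∑ i ∈ Finset.range (n+1), (a i - A) * b (n-i)
          + A * ∑ i ∈ Finset.range (n+1), b (n-i) := by
      rw [Finset.mul_sum, ← Finset.sum_add_distrib]
      exact Finset.sum_congr rfl fun i _ => by ring
    have h2 : ∑ i ∈ Finset.range (n+1), b (n-i) = ∑ i ∈ Finset.range (n+1), b i := by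
      have h3 := Finset.sum_range_reflect b (n+1)
      simpa using h3
    rw [h1, h2, add_div, mul_div_assoc]
  have hterm2 : Tendsto (fun n : ℕ => (∑ i ∈ Finset.range (n+1), b i) / n) atTop (𝓝 B) :=
    avg_shift hb.cesaro
  have habs : Tendsto (fun i => |a i - A|) atTop (𝓝 0) := by
    have h4 := (ha.sub_const A).abs
    simpa using h4
  have hA0 : Tendsto (fun n : ℕ => (∑ i ∈ Finset.range (n+1), |a i - A|) / n) atTop (𝓝 0) :=
    avg_shift habs.cesaro
  have hterm1 : Tendsto
      (fun n : ℕ => (∑ i ∈ Finset.range (n+1), (a i - A) * b (n - i)) / n) atTop (𝓝 0) := by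
    have hg : Tendsto (fun n : ℕ =>
        Cb * ((∑ i ∈ Finset.range (n+1), |a i - A|) / n)) atTop (𝓝 (Cb * 0)) :=
      tendsto_const_nhds.mul hA0
    refine squeeze_zero_norm (fun n => ?_) (by simpa using hg)
    have hn0 : (0:ℝ) ≤ (n:ℝ) := Nat.cast_nonneg n
    rw [Real.norm_eq_abs, abs_div, abs_of_nonneg hn0]
    have hnum : |∑ i ∈ Finset.range (n+1), (a i - A) * b (n - i)|
        ≤ Cb * ∑ i ∈ Finset.range (n+1), |a i - A| := by
      calc |∑ i ∈ Finset.range (n+1), (a i - A) * b (n - i)|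
          ≤ ∑ i ∈ Finset.range (n+1), |(a i - A) * b (n - i)| :=
            Finset.abs_sum_le_sum_abs _ _
        _ ≤ ∑ i ∈ Finset.range (n+1), |a i - A| * Cb := by
            refine Finset.sum_le_sum fun i _ => ?_
            rw [abs_mul, abs_of_nonneg (hb0 (n-i))]
            exact mul_le_mul_of_nonneg_left (hbC (n-i)) (abs_nonneg _)
        _ = Cb * ∑ i ∈ Finset.range (n+1), |a i - A| := by
            rw [Finset.mul_sum]
            exact Finset.sum_congr rfl fun i _ => mul_comm _ _
    calc |∑ i ∈ Finset.range (n+1), (a i - A) * b (n - i)| / (n:ℝ)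
        ≤ (Cb * ∑ i ∈ Finset.range (n+1), |a i - A|) / (n:ℝ) := by
          exact div_le_div_of_nonneg_right hnum hn0
      _ = Cb * ((∑ i ∈ Finset.range (n+1), |a i - A|) / n) := by rw [mul_div_assoc]
  have hsum := hterm1.add ((tendsto_const_nhds (x := A)).mul hterm2)
  rw [zero_add] at hsum
  exact Tendsto.congr (fun n => (hdecomp n).symm) hsum

lemma cP_identity (α : ℝ) (hα : 0 ≤ α) {γ : ℝ} (hγ0 : 0 < γ) (hγ1 : γ < 1) :
    γ * cP α γ = ∑' j : ℕ, ((j : ℝ) + 1) ^ α * γ ^ 2 * (1 - γ) ^ j := by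
  have hx0 : (0:ℝ) < 1 - γ := by linarith
  have hx1 : (1:ℝ) - γ < 1 := by linarith
  have hS : Summable (fun k : ℕ => Gg α k * (1-γ)^k) := summable_Gg α hα hx0 hx1
  set T := ∑' k : ℕ, Gg α k * (1-γ)^k with hT
  have hA1 : Summable (fun k : ℕ => Gg α (k+1) * (1-γ)^(k+1)) :=
    (summable_nat_add_iff (f := fun k : ℕ => Gg α k * (1-γ)^k) 1).2 hS
  have hA2 : Summable (fun k : ℕ => Gg α k * (1-γ)^(k+1)) := by
    have h5 := hS.mul_right (1-γ)
    refine h5.congr fun k => ?_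
    rw [pow_succ]
    ring
  have hsplit : ∑' k : ℕ, (Gg α (k+1) - Gg α k) * (1-γ)^(k+1)
      = (∑' k : ℕ, Gg α (k+1) * (1-γ)^(k+1)) - ∑' k : ℕ, Gg α k * (1-γ)^(k+1) := by
    rw [← Summable.tsum_sub hA1 hA2]
    exact tsum_congr fun k => by ring
  have h1 : ∑' k : ℕ, Gg α (k+1) * (1-γ)^(k+1) = T - 1 := by
    have h6 := Summable.tsum_eq_zero_add hS
    rw [Gg_zero, pow_zero, mul_one] at h6
    rw [← hT] at h6
    linarith
  have h2 : ∑' k : ℕ, Gg α k * (1-γ)^(k+1) = (1-γ) * T := by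
    rw [hT, ← tsum_mul_left]
    exact tsum_congr fun k => by rw [pow_succ]; ring
  have hgoal : ∑' j : ℕ, ((j:ℝ)+1)^α * γ^2 * (1-γ)^j = γ^2 * T := by
    rw [hT, ← tsum_mul_left]
    refine tsum_congr fun j => ?_
    show ((j:ℝ)+1)^α * γ^2 * (1-γ)^j = γ^2 * (((j:ℝ)+1)^α * (1-γ)^j)
    ring
  rw [hgoal]
  unfold cP
  rw [hsplit, h1, h2]
  ring

end St5Aux

/-- **Asymptotics of the expected value `E(L_n(α))`.** -/
theorem statement5 {Ω : Type*} [MeasurableSpace Ω] (P : Measure Ω) [IsProbabilityMeasure P]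
    {d : ℕ} (X : ℕ → Ω → (Fin d → ℤ)) (hiid : IID P X) (γ : ℝ)
    (hγ : (P {ω | ∀ n, 1 ≤ n → walk X n ω ≠ 0}).toReal = γ)
    (hγ0 : 0 < γ) (hγ1 : γ < 1) (α : ℝ) (hα : 0 ≤ α) :
    Tendsto (fun n : ℕ => (∫ ω, Lfun X α n ω ∂P) / n) atTop
      (𝓝 (∑' j : ℕ, ((j : ℝ) + 1) ^ α * γ ^ 2 * (1 - γ) ^ j)) := by
  classical
  have key := St5Aux.integral_Lfun hiid α hα
  have hq : Tendsto (St5Aux.qP P X) atTop (𝓝 γ) := St5Aux.qP_tendsto hiid hγ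
  have he : Tendsto (St5Aux.eP P X α) atTop (𝓝 (St5Aux.cP α γ)) :=
    St5Aux.eP_tendsto hiid α hα hγ hγ0 hγ1
  have hconv := St5Aux.cesaro_conv hq he (St5Aux.eP_nonneg hiid α hα)
    (St5Aux.eP_le hiid α hα hγ hγ0 hγ1)
  rw [← St5Aux.cP_identity α hα hγ0 hγ1]
  exact Tendsto.congr (fun n => by rw [key n]) hconv
end

section
/- Let (X_i)_{i≥1} be i.i.d. ℤ^d-valued random variables whose random walk has escape probability γ ∈ (0,1). Then for every real α ≥ 0, lim_{s↑1} (1−s)² Σ_{n=1}^∞ s^n E(L_n(α)) = γ² Σ_{j=1}^∞ j^α (1−γ)^{j−1}. -/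
open MeasureTheory ProbabilityTheory Filter Topology

set_option linter.unusedSectionVars false
set_option linter.unusedVariables false
set_option linter.unusedTactic false
set_option linter.dupNamespace false

namespace RW

variable {Ω : Type*} [MeasurableSpace Ω] {P : Measure Ω} [IsProbabilityMeasure P]
  {d : ℕ} {X : ℕ → Ω → (Fin d → ℤ)}

/-- The canonical truncated process on tuple space. -/
def Z {d : ℕ} (m : ℕ) (i : ℕ) (w : Fin m → (Fin d → ℤ)) : Fin d → ℤ :=
  if h : i < m then w ⟨i, h⟩ else 0

lemma walk_add (Y : ℕ → Ω → (Fin d → ℤ)) (t j : ℕ) (ω : Ω) :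
    walk Y (t + j) ω = walk Y t ω + walk (fun i => Y (t + i)) j ω := by
  simp [walk, Finset.sum_range_add]

lemma walk_comp (t : ℕ) {n m : ℕ} (hn : n ≤ m) (ω : Ω) :
    walk (Z (d := d) m) n (fun j : Fin m => X (t + (j : ℕ)) ω)
      = walk (fun i => X (t + i)) n ω := by
  refine Finset.sum_congr rfl fun i hi => ?_
  rw [Finset.mem_range] at hi
  simp [Z, dif_pos (lt_of_lt_of_le hi hn)]

lemma localTime_comp (t : ℕ) {n m : ℕ} (hn : n ≤ m) (x : Fin d → ℤ) (ω : Ω) :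
    localTime (Z (d := d) m) n x (fun j : Fin m => X (t + (j : ℕ)) ω)
      = localTime (fun i => X (t + i)) n x ω := by
  unfold localTime
  congr 1
  refine Finset.filter_congr fun i hi => ?_
  rw [Finset.mem_range, Nat.lt_succ_iff] at hi
  rw [walk_comp t (le_trans hi hn)]

lemma meas_tuple (hX : ∀ i, Measurable (X i)) (m : ℕ) (e : Fin m → ℕ) :
    Measurable (fun ω (j : Fin m) => X (e j) ω) :=
  measurable_pi_lambda _ fun j => hX (e j)

lemma law_tuple (hiid : IID P X) {m : ℕ} (e : Fin m → ℕ) (he : Function.Injective e) :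
    P.map (fun ω (j : Fin m) => X (e j) ω) = Measure.pi (fun _ : Fin m => P.map (X 0)) := by
  classical
  have hX := hiid.1
  have : IsProbabilityMeasure (P.map (X 0)) := Measure.isProbabilityMeasure_map (hX 0).aemeasurable
  refine (Measure.pi_eq (μ := fun _ : Fin m => P.map (X 0)) fun s hs => ?_).symm
  rw [Measure.map_apply (meas_tuple hX m e) (MeasurableSet.univ_pi hs)]
  have hpre : (fun ω (j : Fin m) => X (e j) ω) ⁻¹' Set.univ.pi s
      = ⋂ j ∈ (Finset.univ : Finset (Fin m)), X (e j) ⁻¹' s j := by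
    ext ω; simp [Set.mem_pi]
  rw [hpre]
  set sets : ℕ → Set (Fin d → ℤ) := fun i => ⋂ j ∈ {j : Fin m | e j = i}, s j with hsets
  have hkey : ∀ j : Fin m, sets (e j) = s j := by
    intro j
    have h1 : {j' : Fin m | e j' = e j} = {j} := by
      ext j'; simp [he.eq_iff]
    rw [hsets]; simp only [h1]; simp
  have hrw : (⋂ j ∈ (Finset.univ : Finset (Fin m)), X (e j) ⁻¹' s j)
      = ⋂ i ∈ Finset.image e Finset.univ, X i ⁻¹' sets i := by
    rw [Finset.set_biInter_finset_image]
    exact Set.iInter₂_congr fun j _ => by rw [hkey j]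
  rw [hrw]
  rw [iIndepFun_iff_measure_inter_preimage_eq_mul.1 hiid.2.1 (Finset.image e Finset.univ)
    (fun i _ => MeasurableSet.of_discrete)]
  rw [Finset.prod_image (fun a _ b _ h => he h)]
  refine Finset.prod_congr rfl fun j _ => ?_
  rw [← Measure.map_apply (hX (e j)) MeasurableSet.of_discrete, (hiid.2.2 (e j)).map_eq,
    hkey j]

lemma prob_comp (hiid : IID P X) {m : ℕ} {e e' : Fin m → ℕ} (he : Function.Injective e)
    (he' : Function.Injective e') (A : Set (Fin m → (Fin d → ℤ))) :
    P ((fun ω (j : Fin m) => X (e j) ω) ⁻¹' A)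
      = P ((fun ω (j : Fin m) => X (e' j) ω) ⁻¹' A) := by
  rw [← Measure.map_apply (meas_tuple hiid.1 m e) MeasurableSet.of_discrete,
    ← Measure.map_apply (meas_tuple hiid.1 m e') MeasurableSet.of_discrete,
    law_tuple hiid e he, law_tuple hiid e' he']

lemma integral_comp (hiid : IID P X) {m : ℕ} {e e' : Fin m → ℕ} (he : Function.Injective e)
    (he' : Function.Injective e') (F : (Fin m → (Fin d → ℤ)) → ℝ) :
    ∫ ω, F (fun j : Fin m => X (e j) ω) ∂P = ∫ ω, F (fun j : Fin m => X (e' j) ω) ∂P := by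
  rw [← integral_map (meas_tuple hiid.1 m e).aemeasurable
      (Measurable.of_discrete (f := F)).aestronglyMeasurable,
    ← integral_map (meas_tuple hiid.1 m e').aemeasurable
      (Measurable.of_discrete (f := F)).aestronglyMeasurable,
    law_tuple hiid e he, law_tuple hiid e' he']

lemma indep_blocks (hiid : IID P X) (t u : ℕ) (A : Set (Fin t → (Fin d → ℤ)))
    (B : Set (Fin u → (Fin d → ℤ))) :
    P ((fun ω (j : Fin t) => X (j : ℕ) ω) ⁻¹' A ∩ (fun ω (j : Fin u) => X (t + (j : ℕ)) ω) ⁻¹' B)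
      = P ((fun ω (j : Fin t) => X (j : ℕ) ω) ⁻¹' A)
        * P ((fun ω (j : Fin u) => X (t + (j : ℕ)) ω) ⁻¹' B) := by
  have hdisj : Disjoint (Finset.range t) (Finset.Ico t (t + u)) := by
    simp only [Finset.disjoint_left, Finset.mem_range, Finset.mem_Ico]
    omega
  have h0 := hiid.2.1.indepFun_finset (Finset.range t) (Finset.Ico t (t + u)) hdisj hiid.1
  have h1 : IndepFun (fun ω (j : Fin t) => X (j : ℕ) ω)
      (fun ω (j : Fin u) => X (t + (j : ℕ)) ω) P := by
    have := h0.comp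
      (φ := fun (v : (i : (Finset.range t : Finset ℕ)) → (Fin d → ℤ)) (j : Fin t) =>
        v ⟨(j : ℕ), Finset.mem_range.mpr j.2⟩)
      (ψ := fun (v : (i : (Finset.Ico t (t + u) : Finset ℕ)) → (Fin d → ℤ)) (j : Fin u) =>
        v ⟨t + (j : ℕ), Finset.mem_Ico.mpr ⟨Nat.le_add_right _ _, Nat.add_lt_add_left j.2 t⟩⟩)
      Measurable.of_discrete Measurable.of_discrete
    exact this
  exact h1.measure_inter_preimage_eq_mul A B MeasurableSet.of_discrete MeasurableSet.of_discrete

end RW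

namespace RW

variable {Ω : Type*} [MeasurableSpace Ω] {P : Measure Ω} [IsProbabilityMeasure P]
  {d : ℕ} {X : ℕ → Ω → (Fin d → ℤ)}

lemma walk_zero (ω : Ω) : walk X 0 ω = 0 := by simp [walk]

lemma walk_comp' {n m : ℕ} (hn : n ≤ m) (ω : Ω) :
    walk (Z (d := d) m) n (fun j : Fin m => X (j : ℕ) ω) = walk X n ω := by
  have h := walk_comp (X := X) 0 hn ω
  simpa using h

lemma localTime_comp' {n m : ℕ} (hn : n ≤ m) (x : Fin d → ℤ) (ω : Ω) :
    localTime (Z (d := d) m) n x (fun j : Fin m => X (j : ℕ) ω) = localTime X n x ω := by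
  have h := localTime_comp (X := X) 0 hn x ω
  simpa using h

lemma one_le_localTime (n : ℕ) (ω : Ω) : 1 ≤ localTime X n 0 ω := by
  have h0 : 0 ∈ (Finset.range (n + 1)).filter fun i => walk X i ω = 0 := by
    simp [walk_zero]
  exact Finset.card_pos.mpr ⟨0, h0⟩

lemma localTime_le (n : ℕ) (x : Fin d → ℤ) (ω : Ω) : localTime X n x ω ≤ n + 1 :=
  le_trans (Finset.card_filter_le _ _) (le_of_eq (Finset.card_range _))

lemma localTime_mono {n n' : ℕ} (h : n ≤ n') (x : Fin d → ℤ) (ω : Ω) :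
    localTime X n x ω ≤ localTime X n' x ω :=
  Finset.card_le_card (Finset.filter_subset_filter _ (by
    intro i hi; rw [Finset.mem_range] at *; omega))

lemma localTime_shift {t n : ℕ} (htn : t ≤ n) (ω : Ω) (hw : walk X t ω = 0) :
    localTime (fun i => X (t + i)) (n - t) 0 ω
      = ((Finset.Icc t n).filter fun m => walk X m ω = 0).card := by
  have hws : ∀ j, walk (fun i => X (t + i)) j ω = walk X (t + j) ω := by
    intro j; rw [walk_add X t j ω, hw, zero_add]
  unfold localTime
  refine Finset.card_bij (fun j _ => t + j) ?_ ?_ ?_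
  · intro j hj
    simp only [Finset.mem_filter, Finset.mem_range, Nat.lt_succ_iff] at hj
    simp only [Finset.mem_filter, Finset.mem_Icc]
    exact ⟨⟨Nat.le_add_right _ _, by omega⟩, by rw [← hws j]; exact hj.2⟩
  · intro a ha b hb hab
    simpa using hab
  · intro m hm
    simp only [Finset.mem_filter, Finset.mem_Icc] at hm
    refine ⟨m - t, ?_, Nat.add_sub_cancel' hm.1.1⟩
    simp only [Finset.mem_filter, Finset.mem_range, Nat.lt_succ_iff]
    refine ⟨by omega, ?_⟩
    rw [hws, show t + (m - t) = m by omega]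
    exact hm.2

lemma decomp (k n : ℕ) (hk : 1 ≤ k) :
    {ω : Ω | k + 1 ≤ localTime X n 0 ω}
      = ⋃ t ∈ Finset.Icc 1 n,
          ({ω | walk X t ω = 0 ∧ ∀ m, 1 ≤ m → m < t → walk X m ω ≠ 0}
            ∩ {ω | k ≤ localTime (fun i => X (t + i)) (n - t) 0 ω}) := by
  ext ω
  simp only [Set.mem_setOf_eq, Set.mem_iUnion, Set.mem_inter_iff, Finset.mem_Icc, exists_prop]
  constructor
  · intro h
    set T := (Finset.Icc 1 n).filter (fun m => walk X m ω = 0) with hT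
    have hsub : (Finset.range (n + 1)).filter (fun m => walk X m ω = 0) ⊆ insert 0 T := by
      intro m hm
      simp only [Finset.mem_filter, Finset.mem_range] at hm
      rcases Nat.eq_zero_or_pos m with h0 | h0
      · simp [h0]
      · exact Finset.mem_insert_of_mem
          (Finset.mem_filter.mpr ⟨Finset.mem_Icc.mpr ⟨h0, by omega⟩, hm.2⟩)
    have hcardT : k ≤ T.card := by
      have h1 := Finset.card_le_card hsub
      have h2 := Finset.card_insert_le 0 T
      unfold localTime at h; omega
    have hTne : T.Nonempty := Finset.card_pos.mp (by omega)
    set t := T.min' hTne with ht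
    have htT : t ∈ T := Finset.min'_mem _ _
    rw [hT, Finset.mem_filter, Finset.mem_Icc] at htT
    obtain ⟨⟨h1t, htn⟩, hwt⟩ := htT
    refine ⟨t, ⟨h1t, htn⟩, ⟨hwt, ?_⟩, ?_⟩
    · intro m h1m hmt heq
      have hmT : m ∈ T := Finset.mem_filter.mpr ⟨Finset.mem_Icc.mpr ⟨h1m, by omega⟩, heq⟩
      have := Finset.min'_le T m hmT
      omega
    · rw [localTime_shift htn ω hwt]
      refine le_trans hcardT (Finset.card_le_card ?_)
      intro m hm
      rw [hT, Finset.mem_filter, Finset.mem_Icc] at hm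
      have := Finset.min'_le T m (by rw [hT, Finset.mem_filter, Finset.mem_Icc]; exact hm)
      exact Finset.mem_filter.mpr ⟨Finset.mem_Icc.mpr ⟨by omega, hm.1.2⟩, hm.2⟩
  · rintro ⟨t, ⟨h1t, htn⟩, ⟨hwt, _⟩, hB⟩
    rw [localTime_shift htn ω hwt] at hB
    have hsub : insert 0 ((Finset.Icc t n).filter fun m => walk X m ω = 0)
        ⊆ (Finset.range (n + 1)).filter fun m => walk X m ω = 0 := by
      intro m hm
      rcases Finset.mem_insert.mp hm with rfl | hm'
      · simp [walk_zero]
      · rw [Finset.mem_filter, Finset.mem_Icc] at hm'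
        exact Finset.mem_filter.mpr ⟨Finset.mem_range.mpr (by omega), hm'.2⟩
    have hcard := Finset.card_le_card hsub
    rw [Finset.card_insert_of_notMem (fun hmem =>
      absurd (Finset.mem_Icc.mp (Finset.mem_filter.mp hmem).1).1 (by omega))] at hcard
    unfold localTime
    omega

lemma meas_walk (hX : ∀ i, Measurable (X i)) (n : ℕ) : Measurable (walk X n) := by
  have h : walk X n = (fun v : Fin n → (Fin d → ℤ) => walk (Z (d := d) n) n v)
      ∘ (fun ω (j : Fin n) => X (j : ℕ) ω) := by
    funext ω
    exact (walk_comp' le_rfl ω).symm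
  rw [h]
  exact Measurable.of_discrete.comp (meas_tuple hX n _)

lemma meas_localTime (hX : ∀ i, Measurable (X i)) (n : ℕ) (x : Fin d → ℤ) :
    Measurable (fun ω => localTime X n x ω) := by
  have h : (fun ω => localTime X n x ω)
      = (fun v : Fin n → (Fin d → ℤ) => localTime (Z (d := d) n) n x v)
      ∘ (fun ω (j : Fin n) => X (j : ℕ) ω) := by
    funext ω
    exact (localTime_comp' le_rfl x ω).symm
  rw [h]
  exact Measurable.of_discrete.comp (meas_tuple hX n _)

end RW

namespace RW

variable {Ω : Type*} [MeasurableSpace Ω] {P : Measure Ω} [IsProbabilityMeasure P]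
  {d : ℕ} {X : ℕ → Ω → (Fin d → ℤ)}

variable (P X) in
/-- `q k n = P(ℓ(n,0) ≥ k)`. -/
noncomputable def q (k n : ℕ) : ℝ := (P {ω | k ≤ localTime X n 0 ω}).toReal

variable (P X) in
/-- `r t` = probability that the first return to `0` happens at time `t`. -/
noncomputable def r (t : ℕ) : ℝ :=
  (P {ω | walk X t ω = 0 ∧ ∀ m, 1 ≤ m → m < t → walk X m ω ≠ 0}).toReal

lemma measSet_q (hX : ∀ i, Measurable (X i)) (k n : ℕ) :
    MeasurableSet {ω : Ω | k ≤ localTime X n 0 ω} :=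
  (meas_localTime hX n 0) (MeasurableSet.of_discrete (s := {j : ℕ | k ≤ j}))

lemma measSet_r (hX : ∀ i, Measurable (X i)) (t : ℕ) :
    MeasurableSet {ω : Ω | walk X t ω = 0 ∧ ∀ m, 1 ≤ m → m < t → walk X m ω ≠ 0} := by
  have h : {ω : Ω | walk X t ω = 0 ∧ ∀ m, 1 ≤ m → m < t → walk X m ω ≠ 0}
      = (walk X t ⁻¹' {0}) ∩ ⋂ (m : ℕ), ⋂ (_ : 1 ≤ m), ⋂ (_ : m < t), (walk X m ⁻¹' {0})ᶜ := by
    ext ω; simp [Set.mem_iInter]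
  rw [h]
  exact ((meas_walk hX t) MeasurableSet.of_discrete).inter
    (MeasurableSet.iInter fun m => MeasurableSet.iInter fun _ => MeasurableSet.iInter fun _ =>
      ((meas_walk hX m) MeasurableSet.of_discrete).compl)

lemma r_nonneg (t : ℕ) : 0 ≤ r P X t := ENNReal.toReal_nonneg
lemma q_nonneg (k n : ℕ) : 0 ≤ q P X k n := ENNReal.toReal_nonneg

lemma q_le_one (k n : ℕ) : q P X k n ≤ 1 := by
  unfold q
  rw [← ENNReal.toReal_one]
  exact ENNReal.toReal_mono ENNReal.one_ne_top prob_le_one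

lemma q_one (n : ℕ) : q P X 1 n = 1 := by
  unfold q
  have : {ω : Ω | 1 ≤ localTime X n 0 ω} = Set.univ := by
    ext ω; simp [one_le_localTime]
  rw [this, measure_univ, ENNReal.toReal_one]

lemma q_mono (k : ℕ) : Monotone (fun n => q P X k n) := by
  intro n n' h
  refine ENNReal.toReal_mono (measure_ne_top _ _) (measure_mono fun ω hω => ?_)
  exact le_trans hω (localTime_mono h 0 ω)

lemma q_anti (n : ℕ) : Antitone (fun k => q P X k n) := by
  intro k k' h
  exact ENNReal.toReal_mono (measure_ne_top _ _) (measure_mono fun ω hω => le_trans h hω)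

/-- The renewal recursion `q_{k+1}(n) = ∑_{t=1}^n r_t q_k(n-t)`. -/
lemma q_rec (hiid : IID P X) {k : ℕ} (hk : 1 ≤ k) (n : ℕ) :
    q P X (k + 1) n = ∑ t ∈ Finset.Icc 1 n, r P X t * q P X k (n - t) := by
  classical
  have hX := hiid.1
  have hdisj : (↑(Finset.Icc 1 n) : Set ℕ).PairwiseDisjoint
      (fun t => ({ω : Ω | walk X t ω = 0 ∧ ∀ m, 1 ≤ m → m < t → walk X m ω ≠ 0}
        ∩ {ω | k ≤ localTime (fun i => X (t + i)) (n - t) 0 ω})) := by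
    intro t ht t' ht' hne
    rw [Finset.mem_coe, Finset.mem_Icc] at ht ht'
    simp only [Function.onFun]
    rw [Set.disjoint_left]
    rintro ω ⟨⟨hw, hfr⟩, -⟩ ⟨⟨hw', hfr'⟩, -⟩
    rcases lt_or_gt_of_ne hne with h | h
    · exact hfr' t ht.1 h hw
    · exact hfr t' ht'.1 h hw'
  have hmeas : ∀ t ∈ Finset.Icc 1 n,
      MeasurableSet (({ω : Ω | walk X t ω = 0 ∧ ∀ m, 1 ≤ m → m < t → walk X m ω ≠ 0}
        ∩ {ω | k ≤ localTime (fun i => X (t + i)) (n - t) 0 ω})) := by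
    intro t _
    exact (measSet_r hX t).inter (meas_localTime (fun i => hX (t + i)) (n - t) 0
      (MeasurableSet.of_discrete (s := {j : ℕ | k ≤ j})))
  unfold q
  rw [decomp k n hk, measure_biUnion_finset hdisj hmeas, ENNReal.toReal_sum
    (fun t _ => measure_ne_top _ _)]
  refine Finset.sum_congr rfl fun t ht => ?_
  rw [Finset.mem_Icc] at ht
  -- express the two events as preimages of tuple maps
  set A' : Set (Fin t → (Fin d → ℤ)) :=
    {v | walk (Z (d := d) t) t v = 0 ∧ ∀ m, 1 ≤ m → m < t → walk (Z (d := d) t) m v ≠ 0} with hA'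
  set B' : Set (Fin (n - t) → (Fin d → ℤ)) :=
    {v | k ≤ localTime (Z (d := d) (n - t)) (n - t) 0 v} with hB'
  have hA : {ω : Ω | walk X t ω = 0 ∧ ∀ m, 1 ≤ m → m < t → walk X m ω ≠ 0}
      = (fun ω (j : Fin t) => X (j : ℕ) ω) ⁻¹' A' := by
    ext ω
    simp only [Set.mem_setOf_eq, Set.mem_preimage, hA', walk_comp' le_rfl]
    constructor
    · rintro ⟨h1, h2⟩
      exact ⟨h1, fun m hm hmt h0 => h2 m hm hmt (by rwa [walk_comp' hmt.le] at h0)⟩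
    · rintro ⟨h1, h2⟩
      exact ⟨h1, fun m hm hmt h0 => h2 m hm hmt (by rwa [walk_comp' hmt.le])⟩
  have hB : {ω : Ω | k ≤ localTime (fun i => X (t + i)) (n - t) 0 ω}
      = (fun ω (j : Fin (n - t)) => X (t + (j : ℕ)) ω) ⁻¹' B' := by
    ext ω
    simp only [Set.mem_setOf_eq, Set.mem_preimage, hB', localTime_comp t le_rfl]
  rw [hA, hB, indep_blocks hiid t (n - t) A' B', ENNReal.toReal_mul]
  congr 1
  · rw [← hA]; rfl
  · have he : Function.Injective (fun j : Fin (n - t) => t + (j : ℕ)) := by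
      intro a b h
      have h2 : t + (a : ℕ) = t + (b : ℕ) := h
      exact Fin.val_injective (by omega)
    have he' : Function.Injective (fun j : Fin (n - t) => (j : ℕ)) := by
      intro a b h
      exact Fin.val_injective h
    rw [prob_comp hiid he he' B']
    congr 2
    ext ω
    simp only [Set.mem_setOf_eq, Set.mem_preimage, hB', localTime_comp' le_rfl]

end RW

namespace RW

variable {Ω : Type*} [MeasurableSpace Ω] {P : Measure Ω} [IsProbabilityMeasure P]
  {d : ℕ} {X : ℕ → Ω → (Fin d → ℤ)}

variable (P X) in
noncomputable def Qlim (k : ℕ) : ℝ := ⨆ n, q P X k n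

lemma q_bddAbove (k : ℕ) : BddAbove (Set.range fun n => q P X k n) :=
  ⟨1, by rintro x ⟨n, rfl⟩; exact q_le_one k n⟩

lemma q_tendsto (k : ℕ) : Tendsto (fun n => q P X k n) atTop (𝓝 (Qlim P X k)) :=
  tendsto_atTop_ciSup (q_mono k) (q_bddAbove k)

lemma q_le_Qlim (k n : ℕ) : q P X k n ≤ Qlim P X k := le_ciSup (q_bddAbove k) n

lemma Qlim_nonneg (k : ℕ) : 0 ≤ Qlim P X k := le_trans (q_nonneg k 0) (q_le_Qlim k 0)

lemma Qlim_le_one (k : ℕ) : Qlim P X k ≤ 1 := ciSup_le fun n => q_le_one k n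

lemma Qlim_one : Qlim P X 1 = 1 := by
  unfold Qlim
  simp [q_one]

/-- Convolution of a summable nonnegative sequence against a convergent monotone sequence. -/
lemma conv_tendsto {rr u : ℕ → ℝ} {R U : ℝ} (hr0 : ∀ t, 0 ≤ rr t)
    (hR : Tendsto (fun n => ∑ t ∈ Finset.Icc 1 n, rr t) atTop (𝓝 R))
    (humono : Monotone u) (hu0 : ∀ n, 0 ≤ u n)
    (hU : Tendsto u atTop (𝓝 U)) :
    Tendsto (fun n => ∑ t ∈ Finset.Icc 1 n, rr t * u (n - t)) atTop (𝓝 (R * U)) := by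
  have hSmono : Monotone fun n => ∑ t ∈ Finset.Icc 1 n, rr t := fun a b hab =>
    Finset.sum_le_sum_of_subset_of_nonneg (Finset.Icc_subset_Icc_right hab) fun t _ _ => hr0 t
  have hSleR : ∀ n, (∑ t ∈ Finset.Icc 1 n, rr t) ≤ R := fun n => hSmono.ge_of_tendsto hR n
  have huleU : ∀ n, u n ≤ U := fun n => humono.ge_of_tendsto hU n
  have hR0 : 0 ≤ R := le_trans (Finset.sum_nonneg fun t _ => hr0 t) (hSleR 0)
  have hU0 : 0 ≤ U := le_trans (hu0 0) (huleU 0)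
  have hub : ∀ n, (∑ t ∈ Finset.Icc 1 n, rr t * u (n - t)) ≤ R * U := by
    intro n
    calc (∑ t ∈ Finset.Icc 1 n, rr t * u (n - t))
        ≤ ∑ t ∈ Finset.Icc 1 n, rr t * U :=
          Finset.sum_le_sum fun t _ => mul_le_mul_of_nonneg_left (huleU _) (hr0 t)
      _ = (∑ t ∈ Finset.Icc 1 n, rr t) * U := (Finset.sum_mul _ _ _).symm
      _ ≤ R * U := mul_le_mul_of_nonneg_right (hSleR n) hU0
  rw [Metric.tendsto_atTop]
  intro ε hε
  set ε' := ε / (2 * (R + U + 1)) with hε'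
  have hε'pos : 0 < ε' := by positivity
  obtain ⟨T, hT⟩ := Metric.tendsto_atTop.mp hR ε' hε'pos
  have hST : R - ε' ≤ ∑ t ∈ Finset.Icc 1 T, rr t := by
    have := hT T le_rfl
    rw [Real.dist_eq, abs_lt] at this
    linarith [this.1]
  have h2 : Tendsto (fun n : ℕ => u (n - T)) atTop (𝓝 U) :=
    hU.comp (tendsto_sub_atTop_nat T)
  obtain ⟨N, hN⟩ := Metric.tendsto_atTop.mp h2 ε' hε'pos
  refine ⟨max N T, fun n hn => ?_⟩
  have hnT : T ≤ n := le_trans (le_max_right _ _) hn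
  have hnN : N ≤ n := le_trans (le_max_left _ _) hn
  have huT : U - ε' ≤ u (n - T) := by
    have := hN n hnN
    rw [Real.dist_eq, abs_lt] at this
    linarith [this.1]
  have hlow : (∑ t ∈ Finset.Icc 1 T, rr t) * u (n - T)
      ≤ ∑ t ∈ Finset.Icc 1 n, rr t * u (n - t) := by
    calc (∑ t ∈ Finset.Icc 1 T, rr t) * u (n - T)
        = ∑ t ∈ Finset.Icc 1 T, rr t * u (n - T) := Finset.sum_mul _ _ _
      _ ≤ ∑ t ∈ Finset.Icc 1 T, rr t * u (n - t) := by
          refine Finset.sum_le_sum fun t ht => ?_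
          rw [Finset.mem_Icc] at ht
          exact mul_le_mul_of_nonneg_left (humono (by omega)) (hr0 t)
      _ ≤ ∑ t ∈ Finset.Icc 1 n, rr t * u (n - t) := by
          refine Finset.sum_le_sum_of_subset_of_nonneg
            (Finset.Icc_subset_Icc_right hnT) fun t _ _ => ?_
          exact mul_nonneg (hr0 t) (hu0 _)
  set s := ∑ t ∈ Finset.Icc 1 T, rr t with hs
  set v := u (n - T) with hv
  have hs0 : 0 ≤ s := Finset.sum_nonneg fun t _ => hr0 t
  have hsR : s ≤ R := hSleR T
  have hvU : v ≤ U := huleU _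
  have hv0 : 0 ≤ v := hu0 _
  have d1 : (R - s) * v ≤ ε' * v :=
    mul_le_mul_of_nonneg_right (by linarith) hv0
  have d2 : ε' * v ≤ ε' * U := mul_le_mul_of_nonneg_left hvU hε'pos.le
  have d3 : R * (U - v) ≤ R * ε' := mul_le_mul_of_nonneg_left (by linarith) hR0
  have hid : R * U - s * v = R * (U - v) + (R - s) * v := by ring
  have hfrac : (R + U) / (2 * (R + U + 1)) < 1 := by
    rw [div_lt_one (by positivity)]
    linarith
  have hfin : R * ε' + ε' * U < ε := by
    have heq : R * ε' + ε' * U = ε * ((R + U) / (2 * (R + U + 1))) := by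
      rw [hε']; ring
    rw [heq]
    calc ε * ((R + U) / (2 * (R + U + 1))) < ε * 1 := mul_lt_mul_of_pos_left hfrac hε
      _ = ε := mul_one ε
  have hlow2 : R * U - ε < ∑ t ∈ Finset.Icc 1 n, rr t * u (n - t) := by
    have : R * U - s * v < ε := by linarith
    linarith [hlow]
  rw [Real.dist_eq, abs_lt]
  constructor
  · linarith
  · linarith [hub n]

lemma Qlim_succ (hiid : IID P X) {k : ℕ} (hk : 1 ≤ k) :
    Qlim P X (k + 1) = Qlim P X 2 * Qlim P X k := by
  have hS : Tendsto (fun n => ∑ t ∈ Finset.Icc 1 n, r P X t) atTop (𝓝 (Qlim P X 2)) := by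
    refine Tendsto.congr (fun n => ?_) (q_tendsto 2)
    rw [q_rec hiid le_rfl n]
    simp [q_one]
  have h2 : Tendsto (fun n => q P X (k + 1) n) atTop (𝓝 (Qlim P X 2 * Qlim P X k)) := by
    refine Tendsto.congr (fun n => (q_rec hiid hk n).symm) ?_
    exact conv_tendsto r_nonneg hS (q_mono k) (fun n => q_nonneg k n) (q_tendsto k)
  exact tendsto_nhds_unique (q_tendsto (k + 1)) h2

lemma Qlim_geom (hiid : IID P X) (k : ℕ) : Qlim P X (k + 1) = Qlim P X 2 ^ k := by
  induction k with
  | zero => simpa using Qlim_one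
  | succ k ih =>
    rw [Qlim_succ hiid (by omega), ih, pow_succ]
    ring

lemma Qlim_two (hiid : IID P X) {γ : ℝ}
    (hγ : (P {ω | ∀ n, 1 ≤ n → walk X n ω ≠ 0}).toReal = γ) :
    Qlim P X 2 = 1 - γ := by
  have hX := hiid.1
  set C : ℕ → Set Ω := fun n => {ω | ∀ m, 1 ≤ m → m ≤ n → walk X m ω ≠ 0} with hC
  have hCanti : Antitone C := fun a b hab ω hω m h1 h2 => hω m h1 (h2.trans hab)
  have hCmeas : ∀ n, MeasurableSet (C n) := by
    intro n
    have h : C n = ⋂ m, ⋂ (_ : 1 ≤ m), ⋂ (_ : m ≤ n), (walk X m ⁻¹' {0})ᶜ := by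
      ext ω; simp [hC, Set.mem_iInter]
    rw [h]
    exact .iInter fun m => .iInter fun _ => .iInter fun _ =>
      ((meas_walk hX m) MeasurableSet.of_discrete).compl
  have hInt : {ω : Ω | ∀ n, 1 ≤ n → walk X n ω ≠ 0} = ⋂ n, C n := by
    ext ω
    simp only [hC, Set.mem_iInter, Set.mem_setOf_eq]
    exact ⟨fun h n m h1 _ => h m h1, fun h m h1 => h m m h1 le_rfl⟩
  have hCq : ∀ n, (P (C n)).toReal = 1 - q P X 2 n := by
    intro n
    have hcomp : C n = {ω : Ω | 2 ≤ localTime X n 0 ω}ᶜ := by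
      ext ω
      simp only [hC, Set.mem_compl_iff, Set.mem_setOf_eq, not_le]
      constructor
      · intro h
        have hsub : ((Finset.range (n + 1)).filter fun i => walk X i ω = 0) ⊆ {0} := by
          intro m hm
          rw [Finset.mem_filter, Finset.mem_range] at hm
          rcases Nat.eq_zero_or_pos m with h0 | h0
          · simp [h0]
          · exact absurd hm.2 (h m h0 (by omega))
        have hcard := Finset.card_le_card hsub
        rw [Finset.card_singleton] at hcard
        unfold localTime
        omega
      · intro h m h1 hm heq
        have hsub : ({0, m} : Finset ℕ) ⊆ (Finset.range (n + 1)).filter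
            fun i => walk X i ω = 0 := by
          intro x hx
          rcases Finset.mem_insert.mp hx with rfl | hx
          · simp [walk_zero]
          · rw [Finset.mem_singleton] at hx
            subst hx
            exact Finset.mem_filter.mpr ⟨Finset.mem_range.mpr (by omega), heq⟩
        have hcard := Finset.card_le_card hsub
        rw [Finset.card_pair (by omega)] at hcard
        unfold localTime at h
        omega
    rw [hcomp, prob_compl_eq_one_sub (measSet_q hX 2 n),
      ENNReal.toReal_sub_of_le prob_le_one ENNReal.one_ne_top, ENNReal.toReal_one]
    rfl
  have hlim1 : Tendsto (fun n => (P (C n)).toReal) atTop (𝓝 ((P (⋂ n, C n)).toReal)) := by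
    have h := tendsto_measure_iInter_atTop (μ := P)
      (fun n => (hCmeas n).nullMeasurableSet) hCanti ⟨0, measure_ne_top _ _⟩
    exact (ENNReal.tendsto_toReal (measure_ne_top _ _)).comp h
  have hlim2 : Tendsto (fun n => (P (C n)).toReal) atTop (𝓝 (1 - Qlim P X 2)) := by
    refine Tendsto.congr (fun n => (hCq n).symm) ?_
    exact tendsto_const_nhds.sub (q_tendsto 2)
  have hkey : (P (⋂ n, C n)).toReal = 1 - Qlim P X 2 := tendsto_nhds_unique hlim1 hlim2
  rw [hInt, hkey] at hγ
  linarith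

end RW

namespace RW

variable {Ω : Type*} [MeasurableSpace Ω] {P : Measure Ω} [IsProbabilityMeasure P]
  {d : ℕ} {X : ℕ → Ω → (Fin d → ℤ)} {α : ℝ}

/-- Increment of `k ↦ k^α` (with the right convention at `k = 1`). -/
noncomputable def gfun (α : ℝ) (k : ℕ) : ℝ :=
  (k : ℝ) ^ α - if k ≤ 1 then 0 else ((k : ℝ) - 1) ^ α

lemma gfun_one : gfun α 1 = 1 := by simp [gfun, Real.one_rpow]

lemma gfun_nonneg (hα : 0 ≤ α) (k : ℕ) : 0 ≤ gfun α k := by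
  unfold gfun
  split_ifs with h
  · have := Real.rpow_nonneg (show (0:ℝ) ≤ (k:ℝ) by positivity) α
    linarith
  · have h2 : 2 ≤ k := by omega
    have h2' : (2:ℝ) ≤ (k:ℝ) := by exact_mod_cast h2
    have : ((k : ℝ) - 1) ^ α ≤ (k : ℝ) ^ α := Real.rpow_le_rpow (by linarith) (by linarith) hα
    linarith

lemma gfun_le (k : ℕ) : gfun α k ≤ (k : ℝ) ^ α := by
  unfold gfun
  split_ifs with h
  · simp
  · have h2 : 2 ≤ k := by omega
    have h2' : (2:ℝ) ≤ (k:ℝ) := by exact_mod_cast h2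
    have : (0:ℝ) ≤ ((k : ℝ) - 1) ^ α := Real.rpow_nonneg (by linarith) α
    linarith

lemma localTime_succ (n : ℕ) (x : Fin d → ℤ) (ω : Ω) :
    localTime X (n + 1) x ω
      = localTime X n x ω + if walk X (n + 1) ω = x then 1 else 0 := by
  unfold localTime
  rw [show n + 1 + 1 = (n + 1) + 1 from rfl, Finset.range_add_one, Finset.filter_insert]
  split_ifs with h
  · rw [Finset.card_insert_of_notMem (by simp)]
  · simp

lemma visited_succ (n : ℕ) (ω : Ω) :
    visited X (n + 1) ω = insert (walk X (n + 1) ω) (visited X n ω) := by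
  unfold visited
  rw [Finset.range_add_one, Finset.image_insert]

lemma mem_visited {n : ℕ} {x : Fin d → ℤ} {ω : Ω} :
    x ∈ visited X n ω ↔ 0 < localTime X n x ω := by
  unfold visited localTime
  rw [Finset.card_pos]
  simp [Finset.filter_nonempty_iff, Finset.mem_image]

lemma localTime_walk_zero (ω : Ω) : localTime X 0 (walk X 0 ω) ω = 1 := by
  unfold localTime
  rw [Finset.range_one, Finset.filter_singleton, if_pos rfl, Finset.card_singleton]

lemma Lfun_succ (hα : 0 ≤ α) (n : ℕ) (ω : Ω) :
    Lfun X α (n + 1) ω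
      = Lfun X α n ω + gfun α (localTime X (n + 1) (walk X (n + 1) ω) ω) := by
  classical
  set w := walk X (n + 1) ω with hw
  by_cases hmem : w ∈ visited X n ω
  · have hins : visited X (n + 1) ω = visited X n ω := by
      rw [visited_succ]; exact Finset.insert_eq_self.mpr hmem
    have hl : 0 < localTime X n w ω := mem_visited.mp hmem
    have hls : localTime X (n + 1) w ω = localTime X n w ω + 1 := by
      rw [localTime_succ, if_pos rfl]
    have herase : ∀ x ∈ (visited X n ω).erase w,
        (localTime X (n + 1) x ω : ℝ) ^ α = (localTime X n x ω : ℝ) ^ α := by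
      intro x hx
      have hne : x ≠ w := (Finset.mem_erase.mp hx).1
      rw [localTime_succ,
        if_neg (show ¬ walk X (n + 1) ω = x from fun h => hne (h ▸ hw).symm)]
      norm_num
    unfold Lfun
    rw [hins, ← Finset.add_sum_erase _ _ hmem, ← Finset.add_sum_erase _ _ hmem,
      Finset.sum_congr rfl herase, hls]
    have hgf : gfun α (localTime X n w ω + 1)
        = ((localTime X n w ω : ℝ) + 1) ^ α - (localTime X n w ω : ℝ) ^ α := by
      unfold gfun
      rw [if_neg (by omega)]
      push_cast
      ring_nf
    rw [hgf]
    push_cast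
    ring
  · have hins : visited X (n + 1) ω = insert w (visited X n ω) := visited_succ n ω
    have hl0 : localTime X n w ω = 0 := by
      by_contra h
      exact hmem (mem_visited.mpr (Nat.pos_of_ne_zero h))
    have hl1 : localTime X (n + 1) w ω = 1 := by
      rw [localTime_succ, if_pos rfl, hl0]
    have herase : ∀ x ∈ visited X n ω,
        (localTime X (n + 1) x ω : ℝ) ^ α = (localTime X n x ω : ℝ) ^ α := by
      intro x hx
      rw [localTime_succ, if_neg (fun h => hmem (by rw [hw, h]; exact hx))]
      norm_num
    unfold Lfun
    rw [hins, Finset.sum_insert hmem, Finset.sum_congr rfl herase, hl1]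
    rw [gfun_one]
    push_cast
    rw [Real.one_rpow]
    ring

lemma Lfun_eq_sum (hα : 0 ≤ α) (n : ℕ) (ω : Ω) :
    Lfun X α n ω
      = ∑ i ∈ Finset.range (n + 1), gfun α (localTime X i (walk X i ω) ω) := by
  induction n with
  | zero =>
    rw [Finset.range_one, Finset.sum_singleton, localTime_walk_zero, gfun_one]
    unfold Lfun visited
    rw [Finset.range_one, Finset.image_singleton, Finset.sum_singleton,
      localTime_walk_zero]
    rw [Nat.cast_one]
    exact Real.one_rpow α
  | succ n ih =>
    rw [Lfun_succ hα n ω, ih]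
    exact (Finset.sum_range_succ _ (n + 1)).symm

variable (P X) in
/-- `a i = E[g(ℓ(i, S_i))]`. -/
noncomputable def aseq (α : ℝ) (i : ℕ) : ℝ :=
  ∫ ω, gfun α (localTime X i (walk X i ω) ω) ∂P

lemma term_comp (i : ℕ) (ω : Ω) :
    gfun α (localTime X i (walk X i ω) ω)
      = (fun v : Fin i → (Fin d → ℤ) =>
          gfun α (localTime (Z (d := d) i) i (walk (Z (d := d) i) i v) v))
        ((fun ω (j : Fin i) => X (j : ℕ) ω) ω) := by
  simp only
  rw [walk_comp' le_rfl, localTime_comp' le_rfl]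

lemma meas_term (hX : ∀ i, Measurable (X i)) (i : ℕ) :
    Measurable (fun ω => gfun α (localTime X i (walk X i ω) ω)) := by
  have h : (fun ω => gfun α (localTime X i (walk X i ω) ω))
      = (fun v : Fin i → (Fin d → ℤ) =>
          gfun α (localTime (Z (d := d) i) i (walk (Z (d := d) i) i v) v))
        ∘ (fun ω (j : Fin i) => X (j : ℕ) ω) := by
    funext ω
    exact term_comp i ω
  rw [h]
  exact Measurable.of_discrete.comp (meas_tuple hX i _)

lemma abs_term_le (hα : 0 ≤ α) (i : ℕ) (ω : Ω) :
    |gfun α (localTime X i (walk X i ω) ω)| ≤ ((i : ℝ) + 1) ^ α := by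
  rw [abs_of_nonneg (gfun_nonneg hα _)]
  refine le_trans (gfun_le _) ?_
  refine Real.rpow_le_rpow (by positivity) ?_ hα
  have := localTime_le (X := X) i (walk X i ω) ω
  push_cast
  exact_mod_cast Nat.cast_le.mpr this

lemma integrable_term (hX : ∀ i, Measurable (X i)) (hα : 0 ≤ α) (i : ℕ) :
    Integrable (fun ω => gfun α (localTime X i (walk X i ω) ω)) P := by
  refine ⟨(meas_term hX i).aestronglyMeasurable, ?_⟩
  exact HasFiniteIntegral.of_bounded (C := ((i : ℝ) + 1) ^ α)
    (Filter.Eventually.of_forall fun ω => by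
      rw [Real.norm_eq_abs]; exact abs_term_le hα i ω)

lemma integral_Lfun (hX : ∀ i, Measurable (X i)) (hα : 0 ≤ α) (n : ℕ) :
    ∫ ω, Lfun X α n ω ∂P = ∑ i ∈ Finset.range (n + 1), aseq P X α i := by
  have h : (fun ω => Lfun X α n ω)
      = fun ω => ∑ i ∈ Finset.range (n + 1), gfun α (localTime X i (walk X i ω) ω) :=
    funext fun ω => Lfun_eq_sum hα n ω
  rw [h, integral_finset_sum _ (fun i _ => integrable_term hX hα i)]
  rfl

lemma abs_aseq_le (hα : 0 ≤ α) (i : ℕ) : |aseq P X α i| ≤ ((i : ℝ) + 1) ^ α := by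
  unfold aseq
  have := norm_integral_le_of_norm_le_const
    (C := ((i : ℝ) + 1) ^ α) (μ := P)
    (f := fun ω => gfun α (localTime X i (walk X i ω) ω))
    (Filter.Eventually.of_forall fun ω => by
      rw [Real.norm_eq_abs]; exact abs_term_le hα i ω)
  simpa using this

/-- Time reversal: `E[g(ℓ(i,S_i))] = E[g(ℓ(i,0))]`. -/
lemma aseq_eq (hiid : IID P X) (hα : 0 ≤ α) (i : ℕ) :
    aseq P X α i = ∫ ω, gfun α (localTime X i 0 ω) ∂P := by
  classical
  set F : (Fin i → (Fin d → ℤ)) → ℝ := fun v =>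
    gfun α (localTime (Z (d := d) i) i (walk (Z (d := d) i) i v) v) with hF
  have he' : Function.Injective (fun j : Fin i => (j : ℕ)) := fun a b h => Fin.val_injective h
  have he : Function.Injective (fun j : Fin i => i - 1 - (j : ℕ)) := by
    intro a b h
    have h2 : i - 1 - (a : ℕ) = i - 1 - (b : ℕ) := h
    have ha := a.2
    have hb := b.2
    exact Fin.val_injective (by omega)
  have h1 : aseq P X α i = ∫ ω, F ((fun ω (j : Fin i) => X (j : ℕ) ω) ω) ∂P := by
    unfold aseq
    refine integral_congr_ae (Filter.Eventually.of_forall fun ω => ?_)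
    exact term_comp i ω
  rw [h1, integral_comp hiid he' he F]
  refine integral_congr_ae (Filter.Eventually.of_forall fun ω => ?_)
  -- pointwise reversal identity
  set v : Fin i → (Fin d → ℤ) := fun j => X (i - 1 - (j : ℕ)) ω with hv
  have hwalk : ∀ m, m ≤ i → walk (Z (d := d) i) m v = walk X i ω - walk X (i - m) ω := by
    intro m hm
    have h2 : walk (Z (d := d) i) m v = ∑ j ∈ Finset.range m, X (i - 1 - j) ω := by
      refine Finset.sum_congr rfl fun j hj => ?_
      rw [Finset.mem_range] at hj
      simp [Z, dif_pos (lt_of_lt_of_le hj hm), hv]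
    have h3 : ∑ j ∈ Finset.range m, X (i - 1 - j) ω
        = ∑ j ∈ Finset.range m, X ((i - m) + j) ω := by
      rw [← Finset.sum_range_reflect (fun j => X ((i - m) + j) ω) m]
      refine Finset.sum_congr rfl fun j hj => ?_
      rw [Finset.mem_range] at hj
      show X (i - 1 - j) ω = X ((i - m) + (m - 1 - j)) ω
      have harg : i - 1 - j = (i - m) + (m - 1 - j) := by omega
      rw [harg]
    have h4 : walk X ((i - m) + m) ω = walk X (i - m) ω + walk (fun u => X ((i - m) + u)) m ω :=
      walk_add X (i - m) m ω
    rw [show (i - m) + m = i by omega] at h4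
    rw [h2, h3]
    have h5 : (∑ j ∈ Finset.range m, X ((i - m) + j) ω) = walk (fun u => X ((i - m) + u)) m ω := rfl
    rw [h5]
    rw [h4]
    abel
  have hwi : walk (Z (d := d) i) i v = walk X i ω := by
    rw [hwalk i le_rfl, Nat.sub_self, walk_zero, sub_zero]
  have hcount : localTime (Z (d := d) i) i (walk (Z (d := d) i) i v) v
      = localTime X i 0 ω := by
    rw [hwi]
    unfold localTime
    refine Finset.card_bij (fun m _ => i - m) ?_ ?_ ?_
    · intro m hm
      beta_reduce
      rw [Finset.mem_filter, Finset.mem_range, Nat.lt_succ_iff] at hm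
      rw [Finset.mem_filter, Finset.mem_range, Nat.lt_succ_iff]
      refine ⟨by omega, ?_⟩
      have hrw := hwalk m hm.1
      rw [hrw] at hm
      have h6 := hm.2
      rw [sub_eq_self] at h6
      exact h6
    · intro a ha b hb hab
      rw [Finset.mem_filter, Finset.mem_range, Nat.lt_succ_iff] at ha hb
      have h2 : i - a = i - b := hab
      omega
    · intro m hm
      rw [Finset.mem_filter, Finset.mem_range, Nat.lt_succ_iff] at hm
      refine ⟨i - m, ?_, show i - (i - m) = m by omega⟩
      rw [Finset.mem_filter, Finset.mem_range, Nat.lt_succ_iff]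
      refine ⟨by omega, ?_⟩
      rw [hwalk (i - m) (by omega), show i - (i - m) = m by omega, hm.2, sub_zero]
  rw [hF]
  simp only
  rw [hcount]

end RW

namespace RW

variable {Ω : Type*} [MeasurableSpace Ω] {P : Measure Ω} [IsProbabilityMeasure P]
  {d : ℕ} {X : ℕ → Ω → (Fin d → ℤ)} {α : ℝ}

lemma q_eq_zero {k i : ℕ} (hk : i + 2 ≤ k) : q P X k i = 0 := by
  unfold q
  have h : {ω : Ω | k ≤ localTime X i 0 ω} = ∅ := by
    ext ω
    simp only [Set.mem_setOf_eq, Set.mem_empty_iff_false, iff_false, not_le]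
    have := localTime_le (X := X) i 0 ω
    omega
  rw [h, measure_empty, ENNReal.toReal_zero]

lemma q_diff (hX : ∀ i, Measurable (X i)) (k i : ℕ) :
    q P X k i - q P X (k + 1) i = (P {ω | localTime X i 0 ω = k}).toReal := by
  have hset : {ω : Ω | k ≤ localTime X i 0 ω}
      = {ω | localTime X i 0 ω = k} ∪ {ω | k + 1 ≤ localTime X i 0 ω} := by
    ext ω
    simp only [Set.mem_setOf_eq, Set.mem_union]
    omega
  have hdisj : Disjoint {ω : Ω | localTime X i 0 ω = k}
      {ω : Ω | k + 1 ≤ localTime X i 0 ω} := by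
    rw [Set.disjoint_left]
    intro ω h1 h2
    simp only [Set.mem_setOf_eq] at h1 h2
    omega
  have hmeas : MeasurableSet {ω : Ω | k + 1 ≤ localTime X i 0 ω} := measSet_q hX (k + 1) i
  unfold q
  rw [hset, measure_union hdisj hmeas, ENNReal.toReal_add (measure_ne_top _ _)
    (measure_ne_top _ _)]
  ring

lemma integral_gfun (hX : ∀ i, Measurable (X i)) (hα : 0 ≤ α) (i : ℕ) :
    ∫ ω, gfun α (localTime X i 0 ω) ∂P
      = ∑ k ∈ Finset.Icc 1 (i + 1), gfun α k * (q P X k i - q P X (k + 1) i) := by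
  have hpt : (fun ω => gfun α (localTime X i 0 ω))
      = fun ω => ∑ k ∈ Finset.Icc 1 (i + 1),
          if localTime X i 0 ω = k then gfun α k else 0 := by
    funext ω
    rw [Finset.sum_ite_eq, if_pos (Finset.mem_Icc.mpr
      ⟨one_le_localTime i ω, localTime_le i 0 ω⟩)]
  have hind : ∀ k : ℕ, (fun ω => if localTime X i 0 ω = k then gfun α k else 0)
      = Set.indicator {ω : Ω | localTime X i 0 ω = k} (fun _ => gfun α k) := by
    intro k
    funext ω
    rw [Set.indicator_apply]
    simp only [Set.mem_setOf_eq]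
  have hmeas : ∀ k : ℕ, MeasurableSet {ω : Ω | localTime X i 0 ω = k} := fun k =>
    (meas_localTime hX i 0) (MeasurableSet.of_discrete (s := {k}))
  rw [hpt, integral_finset_sum _ (fun k _ => by
    rw [hind k]
    exact (integrable_const (gfun α k)).indicator (hmeas k))]
  refine Finset.sum_congr rfl fun k _ => ?_
  rw [hind k, integral_indicator_const _ (hmeas k), smul_eq_mul, q_diff hX k i, measureReal_def]
  ring

lemma summable_rpow_geom (hα : 0 ≤ α) {c : ℝ} (hc0 : 0 < c) (hc1 : c < 1) :
    Summable (fun k : ℕ => ((k : ℝ) + 1) ^ α * c ^ k) := by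
  set m := ⌈α⌉₊ with hm
  have hg : Summable (fun n : ℕ => (n : ℝ) ^ m * c ^ n) :=
    summable_pow_mul_geometric_of_norm_lt_one m
      (by rw [Real.norm_eq_abs, abs_of_pos hc0]; exact hc1)
  have hg1 : Summable (fun k : ℕ => ((k + 1 : ℕ) : ℝ) ^ m * c ^ (k + 1)) :=
    (summable_nat_add_iff 1).mpr hg
  have hg2 : Summable (fun k : ℕ => c⁻¹ * (((k + 1 : ℕ) : ℝ) ^ m * c ^ (k + 1))) :=
    hg1.mul_left _
  refine Summable.of_nonneg_of_le (fun k => by positivity) (fun k => ?_) hg2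
  have h1 : ((k : ℝ) + 1) ^ α ≤ ((k : ℝ) + 1) ^ (m : ℝ) :=
    Real.rpow_le_rpow_of_exponent_le (by linarith [Nat.cast_nonneg (α := ℝ) k]) (Nat.le_ceil α)
  have h2 : ((k : ℝ) + 1) ^ (m : ℝ) = ((k : ℝ) + 1) ^ m := Real.rpow_natCast _ m
  calc ((k : ℝ) + 1) ^ α * c ^ k ≤ ((k : ℝ) + 1) ^ m * c ^ k := by
        rw [← h2]
        exact mul_le_mul_of_nonneg_right h1 (by positivity)
    _ = c⁻¹ * (((k + 1 : ℕ) : ℝ) ^ m * c ^ (k + 1)) := by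
        push_cast
        rw [pow_succ,
          show c⁻¹ * (((k : ℝ) + 1) ^ m * (c ^ k * c)) = ((k : ℝ) + 1) ^ m * c ^ k * (c * c⁻¹)
            from by ring,
          mul_inv_cancel₀ hc0.ne', mul_one]

lemma aseq_tendsto (hiid : IID P X) (hα : 0 ≤ α) {f : ℝ} (hf : Qlim P X 2 = f)
    (hf0 : 0 < f) (hf1 : f < 1) :
    Tendsto (fun i => aseq P X α i) atTop
      (𝓝 (∑' k : ℕ, gfun α (k + 1) * (f ^ k - f ^ (k + 1)))) := by
  classical
  set h : ℕ → ℕ → ℝ := fun i k => gfun α (k + 1) * (q P X (k + 1) i - q P X (k + 2) i)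
    with hh
  have hrep : ∀ i, aseq P X α i = ∑' k, h i k := by
    intro i
    rw [aseq_eq hiid hα i, integral_gfun hiid.1 hα i,
      tsum_eq_sum (s := Finset.range (i + 1)) (fun k hk => by
        rw [Finset.mem_range, not_lt] at hk
        have h1 : q P X (k + 1) i = 0 := q_eq_zero (by omega)
        have h2 : q P X (k + 2) i = 0 := q_eq_zero (by omega)
        rw [hh]
        simp only [h1, h2]
        ring)]
    rw [show Finset.Icc 1 (i + 1) = Finset.Ico 1 (i + 2) from (Finset.Ico_add_one_right_eq_Icc 1 (i+1)).symm,
      Finset.sum_Ico_eq_sum_range]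
    refine Finset.sum_congr (by norm_num) fun k _ => ?_
    rw [hh]
    simp only
    rw [show 1 + k = k + 1 from Nat.add_comm 1 k]
  have hQ : ∀ k : ℕ, Tendsto (fun i => q P X (k + 1) i) atTop (𝓝 (f ^ k)) := by
    intro k
    have h0 := q_tendsto (P := P) (X := X) (k + 1)
    rwa [Qlim_geom hiid k, hf] at h0
  have hterm : ∀ k, Tendsto (fun i => h i k) atTop
      (𝓝 (gfun α (k + 1) * (f ^ k - f ^ (k + 1)))) := fun k =>
    tendsto_const_nhds.mul ((hQ k).sub (hQ (k + 1)))
  have hbound : ∀ i k, ‖h i k‖ ≤ ((k : ℝ) + 1) ^ α * f ^ k := by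
    intro i k
    rw [hh, Real.norm_eq_abs]
    simp only
    have h1 : 0 ≤ q P X (k + 1) i - q P X (k + 2) i :=
      sub_nonneg.mpr (q_anti i (by omega))
    have h2 : q P X (k + 1) i - q P X (k + 2) i ≤ f ^ k := by
      have h3 := q_le_Qlim (P := P) (X := X) (k + 1) i
      rw [Qlim_geom hiid k, hf] at h3
      have h4 := q_nonneg (P := P) (X := X) (k + 2) i
      linarith
    rw [abs_of_nonneg (mul_nonneg (gfun_nonneg hα _) h1)]
    have h4 : gfun α (k + 1) ≤ ((k : ℝ) + 1) ^ α := by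
      have h5 := gfun_le (α := α) (k + 1)
      push_cast at h5
      exact h5
    exact mul_le_mul h4 h2 h1 (by positivity)
  have hs := summable_rpow_geom hα hf0 hf1
  have hmain := tendsto_tsum_of_dominated_convergence hs hterm
    (Filter.Eventually.of_forall fun i k => hbound i k)
  exact Tendsto.congr (fun i => (hrep i).symm) hmain

end RW

namespace RW

variable {Ω : Type*} [MeasurableSpace Ω] {P : Measure Ω} [IsProbabilityMeasure P]
  {d : ℕ} {X : ℕ → Ω → (Fin d → ℤ)} {α : ℝ}

set_option maxHeartbeats 1000000 in
lemma tsum_value (hα : 0 ≤ α) {γ : ℝ} (hγ0 : 0 < γ) (hγ1 : γ < 1) :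
    ∑' k : ℕ, gfun α (k + 1) * ((1 - γ) ^ k - (1 - γ) ^ (k + 1))
      = γ ^ 2 * ∑' j : ℕ, ((j : ℝ) + 1) ^ α * (1 - γ) ^ j := by
  classical
  set c : ℝ := 1 - γ with hc
  have hc0 : 0 < c := by rw [hc]; linarith
  have hc1 : c < 1 := by rw [hc]; linarith
  have hcc : 1 - c = γ := by rw [hc]; ring
  have hS1 : Summable (fun k : ℕ => ((k : ℝ) + 1) ^ α * c ^ k) :=
    summable_rpow_geom hα hc0 hc1
  have hgf : ∀ k : ℕ, gfun α (k + 1)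
      = ((k : ℝ) + 1) ^ α - (if k = 0 then 0 else (k : ℝ) ^ α) := by
    intro k
    unfold gfun
    push_cast
    congr 1
    by_cases h : k = 0
    · subst h
      rw [if_pos (by norm_num), if_pos rfl]
    · rw [if_neg (by omega), if_neg h]
      norm_num
  have hterm : ∀ k : ℕ, gfun α (k + 1) * (c ^ k - c ^ (k + 1))
      = γ * (((k : ℝ) + 1) ^ α * c ^ k)
        - γ * ((if k = 0 then 0 else (k : ℝ) ^ α) * c ^ k) := by
    intro k
    rw [hgf k, pow_succ]
    linear_combination
      ((((k : ℝ) + 1) ^ α - if k = 0 then 0 else (k : ℝ) ^ α) * c ^ k) * hcc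
  have hS2 : Summable (fun k : ℕ => (if k = 0 then 0 else (k : ℝ) ^ α) * c ^ k) := by
    refine Summable.of_nonneg_of_le (fun k => ?_) (fun k => ?_) hS1
    · refine mul_nonneg ?_ (by positivity)
      split_ifs
      · exact le_refl 0
      · exact Real.rpow_nonneg (Nat.cast_nonneg k) α
    · refine mul_le_mul_of_nonneg_right ?_ (by positivity)
      split_ifs
      · positivity
      · exact Real.rpow_le_rpow (Nat.cast_nonneg k) (by linarith) hα
  have hshift : ∑' k : ℕ, (if k = 0 then 0 else (k : ℝ) ^ α) * c ^ k
      = c * ∑' k : ℕ, ((k : ℝ) + 1) ^ α * c ^ k := by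
    rw [← tsum_mul_left, Summable.tsum_eq_zero_add hS2]
    rw [if_pos rfl, zero_mul, zero_add]
    refine tsum_congr fun k => ?_
    rw [if_neg (Nat.succ_ne_zero k)]
    push_cast
    rw [pow_succ]
    ring
  rw [tsum_congr hterm, Summable.tsum_sub (hS1.mul_left γ) (hS2.mul_left γ), tsum_mul_left,
    tsum_mul_left, hshift]
  set S : ℝ := ∑' k : ℕ, ((k : ℝ) + 1) ^ α * c ^ k
  linear_combination γ * S * hcc

set_option maxHeartbeats 1000000 in
lemma abel_cesaro {b : ℕ → ℝ} {A M : ℝ} (hM : ∀ i, |b i| ≤ M)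
    (hb : Tendsto b atTop (𝓝 A)) :
    Tendsto (fun s : ℝ => (1 - s) * ∑' i : ℕ, b i * s ^ i) (𝓝[<] (1 : ℝ)) (𝓝 A) := by
  rw [Metric.tendsto_nhdsWithin_nhds]
  intro ε hε
  obtain ⟨N, hN⟩ := Metric.tendsto_atTop.mp hb (ε / 4) (by linarith)
  set K : ℝ := ∑ i ∈ Finset.range N, |b i - A| with hK
  have hK0 : 0 ≤ K := Finset.sum_nonneg fun i _ => abs_nonneg _
  refine ⟨min (ε / (4 * (K + 1))) (1 / 2), by positivity, ?_⟩
  intro x hx hdist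
  have hx1 : x < 1 := hx
  have hd : 1 - x < min (ε / (4 * (K + 1))) (1 / 2) := by
    rw [Real.dist_eq, abs_of_nonpos (by linarith)] at hdist
    linarith
  have hx0 : 0 < x := by
    have h := lt_min_iff.mp hd
    linarith [h.2]
  have hgeo : Summable (fun i : ℕ => x ^ i) := summable_geometric_of_lt_one hx0.le hx1
  have habs_mul : ∀ (u : ℕ → ℝ) i, ‖u i * x ^ i‖ = |u i| * x ^ i := by
    intro u i
    rw [norm_mul, Real.norm_eq_abs, Real.norm_eq_abs, abs_of_nonneg (pow_nonneg hx0.le i)]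
  have hsb : Summable (fun i => b i * x ^ i) := by
    refine Summable.of_norm_bounded (hgeo.mul_left M) fun i => ?_
    rw [habs_mul b i]
    exact mul_le_mul_of_nonneg_right (hM i) (pow_nonneg hx0.le i)
  have hMA : ∀ i, |b i - A| ≤ M + |A| := fun i =>
    le_trans (abs_sub _ _) (by linarith [hM i])
  have hscn : Summable (fun i => |b i - A| * x ^ i) := by
    refine Summable.of_nonneg_of_le (fun i => by positivity) (fun i => ?_)
      (hgeo.mul_left (M + |A|))
    exact mul_le_mul_of_nonneg_right (hMA i) (by positivity)
  have hsc : Summable (fun i => (b i - A) * x ^ i) := by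
    refine Summable.of_norm_bounded hscn fun i => ?_
    rw [habs_mul (fun j => b j - A) i]
  have hsplit : ∑' i, b i * x ^ i = (∑' i, (b i - A) * x ^ i) + A * (1 - x)⁻¹ := by
    have h1 : ∀ i : ℕ, b i * x ^ i = (b i - A) * x ^ i + A * x ^ i := fun i => by ring
    rw [tsum_congr h1, Summable.tsum_add hsc (hgeo.mul_left A), tsum_mul_left,
      tsum_geometric_of_lt_one hx0.le hx1]
  have h1x : 0 < 1 - x := by linarith
  have hgoal : (1 - x) * ∑' i, b i * x ^ i - A = (1 - x) * ∑' i, (b i - A) * x ^ i := by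
    rw [hsplit, mul_add]
    have h2 : (1 - x) * (A * (1 - x)⁻¹) = A := by
      rw [show (1 - x) * (A * (1 - x)⁻¹) = A * ((1 - x) * (1 - x)⁻¹) from by ring,
        mul_inv_cancel₀ h1x.ne', mul_one]
    rw [h2]
    ring
  have htail : ∑' i : ℕ, |b (i + N) - A| * x ^ (i + N) ≤ ε / 4 * (1 - x)⁻¹ := by
    have hle : ∀ i : ℕ, |b (i + N) - A| * x ^ (i + N) ≤ ε / 4 * x ^ i := by
      intro i
      have h2 : |b (i + N) - A| ≤ ε / 4 := by
        have h3 := hN (i + N) (by omega)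
        rw [Real.dist_eq] at h3
        exact h3.le
      calc |b (i + N) - A| * x ^ (i + N) ≤ ε / 4 * x ^ (i + N) :=
            mul_le_mul_of_nonneg_right h2 (by positivity)
        _ ≤ ε / 4 * x ^ i := by
            refine mul_le_mul_of_nonneg_left ?_ (by linarith)
            exact pow_le_pow_of_le_one hx0.le hx1.le (by omega)
    calc ∑' i : ℕ, |b (i + N) - A| * x ^ (i + N) ≤ ∑' i : ℕ, ε / 4 * x ^ i :=
          Summable.tsum_le_tsum hle ((summable_nat_add_iff N).mpr hscn) (hgeo.mul_left (ε / 4))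
      _ = ε / 4 * (1 - x)⁻¹ := by rw [tsum_mul_left, tsum_geometric_of_lt_one hx0.le hx1]
  have hhead : ∑ i ∈ Finset.range N, |b i - A| * x ^ i ≤ K := by
    refine Finset.sum_le_sum fun i _ => ?_
    exact mul_le_of_le_one_right (abs_nonneg _) (pow_le_one₀ hx0.le hx1.le)
  have hsum_bound : ∑' i, |b i - A| * x ^ i ≤ K + ε / 4 * (1 - x)⁻¹ := by
    rw [← Summable.sum_add_tsum_nat_add N hscn]
    linarith [htail, hhead]
  have habs : |∑' i, (b i - A) * x ^ i| ≤ ∑' i, |b i - A| * x ^ i := by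
    have h3 : (fun i : ℕ => ‖(b i - A) * x ^ i‖) = fun i => |b i - A| * x ^ i :=
      funext fun i => habs_mul (fun j => b j - A) i
    calc |∑' i, (b i - A) * x ^ i| ≤ ∑' i, ‖(b i - A) * x ^ i‖ :=
          norm_tsum_le_tsum_norm (by rw [h3]; exact hscn)
      _ = ∑' i, |b i - A| * x ^ i := by rw [h3]
  rw [Real.dist_eq, hgoal, abs_mul, abs_of_pos h1x]
  have hfin1 : (1 - x) * |∑' i, (b i - A) * x ^ i| ≤ (1 - x) * (K + ε / 4 * (1 - x)⁻¹) :=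
    mul_le_mul_of_nonneg_left (le_trans habs hsum_bound) h1x.le
  have hfin2 : (1 - x) * (K + ε / 4 * (1 - x)⁻¹) = (1 - x) * K + ε / 4 * ((1 - x) * (1 - x)⁻¹) := by
    ring
  rw [mul_inv_cancel₀ h1x.ne', mul_one] at hfin2
  have hd1 : 1 - x < ε / (4 * (K + 1)) := lt_of_lt_of_le hd (min_le_left _ _)
  have hd2 : (1 - x) * K ≤ ε / (4 * (K + 1)) * K :=
    mul_le_mul_of_nonneg_right hd1.le hK0
  have hd3 : ε / (4 * (K + 1)) * K ≤ ε / 4 := by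
    rw [div_mul_eq_mul_div, div_le_div_iff₀ (by positivity) (by norm_num)]
    nlinarith
  linarith

end RW

namespace RW

variable {Ω : Type*} [MeasurableSpace Ω] {P : Measure Ω} [IsProbabilityMeasure P]
  {d : ℕ} {X : ℕ → Ω → (Fin d → ℤ)} {α : ℝ}

set_option maxHeartbeats 1000000 in
lemma genfun (hiid : IID P X) (hα : 0 ≤ α) {s : ℝ} (hs0 : 0 < s) (hs1 : s < 1) :
    (1 - s) ^ 2 * ∑' n : ℕ, s ^ (n + 1) * ∫ ω, Lfun X α (n + 1) ω ∂P
      = (1 - s) * (∑' i : ℕ, aseq P X α i * s ^ i) - (1 - s) ^ 2 * aseq P X α 0 := by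
  classical
  have hsa : Summable (fun i => aseq P X α i * s ^ i) := by
    refine Summable.of_norm_bounded (summable_rpow_geom hα hs0 hs1) fun i => ?_
    rw [norm_mul, Real.norm_eq_abs, Real.norm_eq_abs, abs_of_nonneg (pow_nonneg hs0.le i)]
    exact mul_le_mul_of_nonneg_right (abs_aseq_le hα i) (pow_nonneg hs0.le i)
  have hgeo : Summable (fun j : ℕ => s ^ j) := summable_geometric_of_lt_one hs0.le hs1
  have hsan : Summable (fun i => ‖aseq P X α i * s ^ i‖) := by
    rw [show (fun i => ‖aseq P X α i * s ^ i‖) = fun i => |aseq P X α i * s ^ i| from rfl]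
    exact (summable_abs_iff).mpr hsa
  have hgeon : Summable (fun j : ℕ => ‖s ^ j‖) := by
    refine hgeo.congr fun j => ?_
    rw [Real.norm_eq_abs, abs_of_nonneg (pow_nonneg hs0.le j)]
  have hprod := tsum_mul_tsum_eq_tsum_sum_range_of_summable_norm hsan hgeon
  have hinner : ∀ n : ℕ, (∑ k ∈ Finset.range (n + 1), aseq P X α k * s ^ k * s ^ (n - k))
      = s ^ n * ∑ k ∈ Finset.range (n + 1), aseq P X α k := by
    intro n
    rw [Finset.mul_sum]
    refine Finset.sum_congr rfl fun k hk => ?_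
    rw [Finset.mem_range, Nat.lt_succ_iff] at hk
    rw [show s ^ n = s ^ k * s ^ (n - k) from by rw [← pow_add]; congr 1; omega]
    ring
  set u : ℕ → ℝ := fun n => s ^ n * ∑ i ∈ Finset.range (n + 1), aseq P X α i with hu
  have hSA : ∀ n : ℕ, |∑ i ∈ Finset.range (n + 1), aseq P X α i| ≤ ((n : ℝ) + 1) ^ (α + 1) := by
    intro n
    calc |∑ i ∈ Finset.range (n + 1), aseq P X α i|
        ≤ ∑ i ∈ Finset.range (n + 1), |aseq P X α i| := Finset.abs_sum_le_sum_abs _ _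
      _ ≤ ∑ i ∈ Finset.range (n + 1), ((n : ℝ) + 1) ^ α := by
          refine Finset.sum_le_sum fun i hi => ?_
          rw [Finset.mem_range, Nat.lt_succ_iff] at hi
          refine le_trans (abs_aseq_le hα i) ?_
          refine Real.rpow_le_rpow (by positivity) ?_ hα
          have : (i : ℝ) ≤ (n : ℝ) := Nat.cast_le.mpr hi
          linarith
      _ = ((n : ℝ) + 1) * ((n : ℝ) + 1) ^ α := by
          rw [Finset.sum_const, Finset.card_range]
          push_cast
          ring
      _ = ((n : ℝ) + 1) ^ (α + 1) := by
          rw [Real.rpow_add_one (by positivity)]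
          ring
  have husum : Summable u := by
    refine Summable.of_norm_bounded (summable_rpow_geom (α := α + 1) (by linarith) hs0 hs1) fun n => ?_
    rw [hu]
    simp only
    rw [norm_mul, Real.norm_eq_abs, Real.norm_eq_abs, abs_of_nonneg (pow_nonneg hs0.le n)]
    rw [mul_comm (s ^ n)]
    exact mul_le_mul_of_nonneg_right (hSA n) (pow_nonneg hs0.le n)
  have hu0 : u 0 = aseq P X α 0 := by
    rw [hu]
    simp
  have h3 : (∑' n, u n) = (∑' i, aseq P X α i * s ^ i) * (1 - s)⁻¹ := by
    calc (∑' n, u n) = ∑' n : ℕ, ∑ k ∈ Finset.range (n + 1), aseq P X α k * s ^ k * s ^ (n - k) :=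
          tsum_congr fun n => (hinner n).symm
      _ = (∑' i, aseq P X α i * s ^ i) * ∑' j : ℕ, s ^ j := hprod.symm
      _ = (∑' i, aseq P X α i * s ^ i) * (1 - s)⁻¹ := by
          rw [tsum_geometric_of_lt_one hs0.le hs1]
  have hmain : ∑' n : ℕ, s ^ (n + 1) * ∫ ω, Lfun X α (n + 1) ω ∂P
      = (∑' i, aseq P X α i * s ^ i) * (1 - s)⁻¹ - aseq P X α 0 := by
    have h1 : ∀ n : ℕ, s ^ (n + 1) * ∫ ω, Lfun X α (n + 1) ω ∂P = u (n + 1) := by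
      intro n
      rw [hu]
      simp only
      rw [integral_Lfun hiid.1 hα (n + 1)]
    rw [tsum_congr h1]
    have h2 := Summable.tsum_eq_zero_add husum
    rw [hu0] at h2
    rw [← h3]
    linarith [h2]
  rw [hmain]
  have h1s : (1 : ℝ) - s ≠ 0 := sub_ne_zero.mpr (by linarith)
  rw [mul_sub]
  congr 1
  rw [show (1 - s) ^ 2 * ((∑' i, aseq P X α i * s ^ i) * (1 - s)⁻¹)
      = (1 - s) * (∑' i, aseq P X α i * s ^ i) * ((1 - s) * (1 - s)⁻¹) from by ring,
    mul_inv_cancel₀ h1s, mul_one]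

end RW


set_option maxHeartbeats 1000000 in
/-- **Abelian asymptotics of the generating function of `(E(L_n(α)))_{n ≥ 1}`:**
`(1−s)² ∑_{n ≥ 1} s^n E(L_n(α)) → γ² ∑_{j ≥ 1} j^α (1−γ)^{j−1}` as `s ↑ 1`. -/
theorem statement12 {Ω : Type*} [MeasurableSpace Ω] (P : Measure Ω) [IsProbabilityMeasure P]
    {d : ℕ} (X : ℕ → Ω → (Fin d → ℤ)) (hiid : IID P X) (γ : ℝ)
    (hγ : (P {ω | ∀ n, 1 ≤ n → walk X n ω ≠ 0}).toReal = γ)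
    (hγ0 : 0 < γ) (hγ1 : γ < 1) (α : ℝ) (hα : 0 ≤ α) :
    Tendsto
      (fun s : ℝ => (1 - s) ^ 2 * ∑' n : ℕ, s ^ (n + 1) * ∫ ω, Lfun X α (n + 1) ω ∂P)
      (𝓝[<] 1) (𝓝 (γ ^ 2 * ∑' j : ℕ, ((j : ℝ) + 1) ^ α * (1 - γ) ^ j)) := by
  classical
  set A : ℝ := γ ^ 2 * ∑' j : ℕ, ((j : ℝ) + 1) ^ α * (1 - γ) ^ j with hA
  have hfγ : RW.Qlim P X 2 = 1 - γ := RW.Qlim_two hiid hγ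
  have haseq : Tendsto (fun i => RW.aseq P X α i) atTop (𝓝 A) := by
    have h1 := RW.aseq_tendsto hiid hα hfγ (by linarith) (by linarith)
    rwa [RW.tsum_value hα hγ0 hγ1] at h1
  obtain ⟨U, hU⟩ := haseq.bddAbove_range
  obtain ⟨L, hL⟩ := haseq.bddBelow_range
  have hM : ∀ i, |RW.aseq P X α i| ≤ max U (-L) := by
    intro i
    rw [abs_le]
    constructor
    · have h1 : L ≤ RW.aseq P X α i := hL (Set.mem_range_self i)
      have h2 : -L ≤ max U (-L) := le_max_right _ _
      linarith
    · exact le_trans (hU (Set.mem_range_self i)) (le_max_left _ _)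
  have habel := RW.abel_cesaro hM haseq
  have hzero : Tendsto (fun s : ℝ => (1 - s) ^ 2 * RW.aseq P X α 0) (𝓝[<] (1 : ℝ)) (𝓝 0) := by
    have h1 : Tendsto (fun s : ℝ => (1 - s) ^ 2 * RW.aseq P X α 0) (𝓝 (1 : ℝ))
        (𝓝 ((1 - 1) ^ 2 * RW.aseq P X α 0)) := by
      exact (((continuous_const.sub continuous_id).pow 2).mul continuous_const).tendsto 1
    have h2 : ((1 : ℝ) - 1) ^ 2 * RW.aseq P X α 0 = 0 := by norm_num
    rw [h2] at h1
    exact h1.mono_left nhdsWithin_le_nhds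
  have hcomb := habel.sub hzero
  rw [sub_zero] at hcomb
  refine Tendsto.congr' ?_ hcomb
  filter_upwards [Ioo_mem_nhdsLT_of_mem (show (1 : ℝ) ∈ Set.Ioc 0 1 by norm_num)] with s hs
  exact (RW.genfun hiid hα hs.1 hs.2).symm
end
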